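/- arXiv:0809.4735 — 5 statements merged into one kernel-verified Lean document; each statement's English description precedes it below -/
import Mathlib

section
/- A topological space is homeomorphic to the Cantor set if and only if it is a nonempty, second countable, compact, Hausdorff, totally disconnected space with no isolated points. -/
open Set Topology PiNat CantorScheme Filter
open scoped ENNReal

namespace BrouwerCantor

lemma cantor_not_isOpen_singleton (y : ℕ → Bool) : ¬ IsOpen ({y} : Set (ℕ → Bool)) := by
  intro h
  rw [isOpen_pi_iff] at h
  obtain ⟨I, u, hu, hsub⟩ := h y rfl
  set n : ℕ := (I.sup id) + 1 with hn
  have hnI : n ∉ I := by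
    intro hmem
    have : n ≤ I.sup id := Finset.le_sup (f := id) hmem
    omega
  have hz : Function.update y n (!(y n)) ∈ (I : Set ℕ).pi u := by
    intro i hi
    have hne : i ≠ n := fun h' => hnI (h' ▸ hi)
    rw [Function.update_of_ne hne]
    exact (hu i hi).2
  have := hsub hz
  rw [mem_singleton_iff] at this
  have := congrFun this n
  rw [Function.update_self] at this
  simp at this


variable {X : Type} [MetricSpace X] [CompactSpace X] [TotallyDisconnectedSpace X]

lemma split2 (hperf : ∀ x : X, ¬ IsOpen ({x} : Set X)) {C : Set X}
    (hC : IsClopen C) (hne : C.Nonempty) :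
    ∃ A B : Set X, IsClopen A ∧ IsClopen B ∧ A.Nonempty ∧ B.Nonempty ∧
      Disjoint A B ∧ A ∪ B = C := by
  obtain ⟨x, hx⟩ := hne
  have hy : ∃ y ∈ C, y ≠ x := by
    by_contra h
    push_neg at h
    have hCx : C = {x} := subset_antisymm (fun y hy => h y hy) (singleton_subset_iff.2 hx)
    exact hperf x (hCx ▸ hC.2)
  obtain ⟨y, hyC, hyx⟩ := hy
  obtain ⟨U, hU, hxU, hyU⟩ := exists_isClopen_of_totally_separated (Ne.symm hyx)
  refine ⟨C ∩ U, C \ U, hC.inter hU, hC.diff hU, ⟨x, hx, hxU⟩, ⟨y, hyC, hyU⟩, ?_, ?_⟩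
  · exact disjoint_compl_right.mono inter_subset_right (diff_subset_compl _ _)
  · exact inter_union_diff C U


lemma splitFin (hperf : ∀ x : X, ¬ IsOpen ({x} : Set X)) :
    ∀ (n : ℕ) {C : Set X}, IsClopen C → C.Nonempty →
    ∃ D : Fin (n + 1) → Set X, (∀ i, IsClopen (D i) ∧ (D i).Nonempty) ∧
      (∀ i j, i ≠ j → Disjoint (D i) (D j)) ∧ ⋃ i, D i = C := by
  intro n
  induction n with
  | zero =>
    intro C hC hne
    exact ⟨fun _ => C, fun _ => ⟨hC, hne⟩, fun i j hij => absurd (Fin.fin_one_eq_zero i ▸ Fin.fin_one_eq_zero j ▸ rfl) hij,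
      iUnion_const _⟩
  | succ n ih =>
    intro C hC hne
    obtain ⟨A, B, hA, hB, hAne, hBne, hAB, hABC⟩ := split2 hperf hC hne
    obtain ⟨D', hD'1, hD'2, hD'3⟩ := ih hA hAne
    refine ⟨Fin.cons B D', ?_, ?_, ?_⟩
    · intro i
      refine Fin.cases ?_ ?_ i
      · simpa using ⟨hB, hBne⟩
      · intro j; simpa using hD'1 j
    · have hDA : ∀ i' : Fin (n + 1), D' i' ⊆ A := fun i' => hD'3 ▸ subset_iUnion D' i'
      intro i j hij
      induction i using Fin.cases with
      | zero =>
        induction j using Fin.cases with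
        | zero => exact absurd rfl hij
        | succ j' =>
          simp only [Fin.cons_zero, Fin.cons_succ]
          exact (hAB.mono_left (hDA j')).symm
      | succ i' =>
        induction j using Fin.cases with
        | zero =>
          simp only [Fin.cons_zero, Fin.cons_succ]
          exact hAB.mono_left (hDA i')
        | succ j' =>
          simp only [Fin.cons_succ]
          exact hD'2 i' j' (by simpa using hij)
    · have : ⋃ i, (Fin.cons B D' : Fin (n + 2) → Set X) i = B ∪ ⋃ i, D' i := by
        ext x
        simp only [mem_iUnion, Fin.exists_fin_succ, Fin.cons_zero, Fin.cons_succ, mem_union]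
      rw [this, hD'3, union_comm, hABC]


lemma splitIota (hperf : ∀ x : X, ¬ IsOpen ({x} : Set X)) (ι : Type) [Fintype ι] [Nonempty ι]
    {C : Set X} (hC : IsClopen C) (hne : C.Nonempty) :
    ∃ D : ι → Set X, (∀ i, IsClopen (D i) ∧ (D i).Nonempty) ∧
      (∀ i j, i ≠ j → Disjoint (D i) (D j)) ∧ ⋃ i, D i = C := by
  obtain ⟨m, hm⟩ : ∃ m, Fintype.card ι = m + 1 :=
    ⟨Fintype.card ι - 1, (Nat.succ_pred_eq_of_pos Fintype.card_pos).symm⟩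
  obtain ⟨D', h1, h2, h3⟩ := splitFin hperf m hC hne
  let e : ι ≃ Fin (m + 1) := Fintype.equivFinOfCardEq hm
  refine ⟨fun i => D' (e i), fun i => h1 (e i), fun i j hij => h2 _ _ (fun h => hij (e.injective h)), ?_⟩
  rw [← h3]
  exact e.surjective.iUnion_comp (fun i => D' i)

lemma smallcover {C : Set X} (hC : IsClopen C) {ε : ℝ} (hε : 0 < ε) :
    ∃ (n : ℕ) (W : ℕ → Set X),
      (∀ i, IsClopen (W i) ∧ W i ⊆ C ∧ ∀ y ∈ W i, ∀ z ∈ W i, dist y z ≤ ε) ∧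
      (∀ i j, i ≠ j → Disjoint (W i) (W j)) ∧ (⋃ i, W i = C) ∧ (∀ i, n ≤ i → W i = ∅) := by
  classical
  -- choose clopen neighborhoods
  have key : ∀ x : X, x ∈ C → ∃ V : Set X, IsClopen V ∧ x ∈ V ∧ V ⊆ Metric.ball x (ε/2) ∩ C :=
    fun x hx => compact_exists_isClopen_in_isOpen
      ((Metric.isOpen_ball).inter hC.2) ⟨Metric.mem_ball_self (by linarith), hx⟩
  choose V hV1 hV2 hV3 using key
  have hcover : C ⊆ ⋃ x : C, V x x.2 := fun x hx => mem_iUnion.2 ⟨⟨x, hx⟩, hV2 x hx⟩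
  obtain ⟨t, ht⟩ := (hC.1.isCompact).elim_finite_subcover (fun x : C => V x x.2)
    (fun x => (hV1 x.1 x.2).2) hcover
  -- enumerate
  let l := t.toList
  let n := l.length
  let V' : ℕ → Set X := fun i => if h : i < n then V (l.get ⟨i, h⟩) (l.get ⟨i, h⟩).2 else ∅
  have hV'clopen : ∀ i, IsClopen (V' i) := by
    intro i
    by_cases h : i < n
    · simp only [V', dif_pos h]; exact hV1 _ _
    · simp only [V', dif_neg h]; exact isClopen_empty
  have hV'small : ∀ i, V' i ⊆ C ∧ ∀ y ∈ V' i, ∀ z ∈ V' i, dist y z ≤ ε := by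
    intro i
    by_cases h : i < n
    · simp only [V', dif_pos h]
      set x := l.get ⟨i, h⟩
      refine ⟨(hV3 x.1 x.2).trans inter_subset_right, fun y hy z hz => ?_⟩
      have hy' := ((hV3 x.1 x.2) hy).1
      have hz' := ((hV3 x.1 x.2) hz).1
      rw [Metric.mem_ball] at hy' hz'
      calc dist y z ≤ dist y x.1 + dist x.1 z := dist_triangle _ _ _
        _ ≤ ε := by rw [dist_comm (x.1 : X) z] at *; linarith
    · simp only [V', dif_neg h]; exact ⟨empty_subset _, fun y hy => absurd hy (notMem_empty y)⟩
  have hV'cover : ⋃ i, V' i = C := by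
    apply subset_antisymm
    · exact iUnion_subset fun i => (hV'small i).1
    · intro x hx
      obtain ⟨y, hyt, hxy⟩ := by
        have := ht hx
        simpa only [mem_iUnion, exists_prop] using this
      obtain ⟨i, hi⟩ := List.mem_iff_get.1 (Finset.mem_toList.2 hyt)
      exact mem_iUnion.2 ⟨i.1, by simp only [V', dif_pos (show i.1 < n from i.2)]; rw [show l.get ⟨i.1, i.2⟩ = y from hi]; exact hxy⟩
  refine ⟨n, disjointed V', ?_, ?_, ?_, ?_⟩
  · intro i
    have hsub : disjointed V' i ⊆ V' i := disjointed_subset V' i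
    refine ⟨?_, hsub.trans (hV'small i).1, fun y hy z hz => (hV'small i).2 y (hsub hy) z (hsub hz)⟩
    -- clopen-ness of disjointed
    have hpart : ∀ k, IsClopen ((partialSups V') k) := by
      intro k
      induction k with
      | zero => simpa using hV'clopen 0
      | succ k ihk => rw [partialSups_add_one]; exact ihk.union (hV'clopen (k+1))
    rcases i with _ | i
    · simpa [disjointed_zero] using hV'clopen 0
    · rw [disjointed_add_one]
      exact (hV'clopen (i+1)).diff (hpart i)
  · exact fun i j hij => disjoint_disjointed V' hij
  · rw [iUnion_disjointed]; exact hV'cover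
  · intro i hi
    apply eq_empty_of_subset_empty
    refine (disjointed_subset V' i).trans ?_
    simp only [V', dif_neg (Nat.not_lt.2 hi)]
    exact subset_rfl

/-- Master lemma: any nonempty clopen set can be partitioned into exactly `card ι` nonempty
clopen pieces of "diameter" at most `ε`, as soon as `card ι` is large enough. -/
lemma master (hperf : ∀ x : X, ¬ IsOpen ({x} : Set X)) {C : Set X}
    (hC : IsClopen C) (hne : C.Nonempty) {ε : ℝ} (hε : 0 < ε) :
    ∃ n₀ : ℕ, ∀ (ι : Type) [Fintype ι] [Nonempty ι], n₀ ≤ Fintype.card ι →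
      ∃ D : ι → Set X,
        (∀ i, IsClopen (D i) ∧ (D i).Nonempty ∧ D i ⊆ C ∧
          ∀ y ∈ D i, ∀ z ∈ D i, dist y z ≤ ε) ∧
        (∀ i j, i ≠ j → Disjoint (D i) (D j)) ∧ ⋃ i, D i = C := by
  classical
  obtain ⟨n, W, hW1, hW2, hW3, hW4⟩ := smallcover hC hε
  set K : Finset ℕ := (Finset.range n).filter (fun i => (W i).Nonempty) with hK
  have hKmem : ∀ i, i ∈ K ↔ (W i).Nonempty := by
    intro i
    simp only [hK, Finset.mem_filter, Finset.mem_range, and_iff_right_iff_imp]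
    intro h
    by_contra hn
    rw [hW4 i (Nat.not_lt.1 hn)] at h
    exact h.ne_empty rfl
  have hKne : K.Nonempty := by
    obtain ⟨x, hx⟩ := hne
    rw [← hW3] at hx
    obtain ⟨i, hi⟩ := mem_iUnion.1 hx
    exact ⟨i, (hKmem i).2 ⟨x, hi⟩⟩
  haveI : Nonempty ↥K := ⟨⟨hKne.choose, hKne.choose_spec⟩⟩
  refine ⟨K.card, ?_⟩
  intro ι _ _ hcard
  -- a surjection f : ι → K
  have hcard' : Fintype.card ↥K ≤ Fintype.card ι := by rwa [Fintype.card_coe]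
  obtain ⟨g⟩ : Nonempty (↥K ↪ ι) := Function.Embedding.nonempty_of_card_le hcard'
  let f : ι → ↥K := fun i => if h : ∃ k, g k = i then h.choose else Classical.arbitrary ↥K
  have hfg : ∀ k, f (g k) = k := by
    intro k
    have h : ∃ k', g k' = g k := ⟨k, rfl⟩
    simp only [f, dif_pos h]
    exact g.injective h.choose_spec
  have hfsurj : Function.Surjective f := fun k => ⟨g k, hfg k⟩
  -- partition each W k by its fiber
  have hfiber : ∀ k : ↥K, ∃ E : {i : ι // f i = k} → Set X,
      (∀ t, IsClopen (E t) ∧ (E t).Nonempty) ∧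
      (∀ t s, t ≠ s → Disjoint (E t) (E s)) ∧ ⋃ t, E t = W k.1 := by
    intro k
    haveI : Nonempty {i : ι // f i = k} := ⟨⟨g k, hfg k⟩⟩
    exact splitIota hperf _ (hW1 k.1).1 ((hKmem k.1).1 k.2)
  choose E hE1 hE2 hE3 using hfiber
  let Dfull : (k : ↥K) → ι → Set X := fun k i => if h : f i = k then E k ⟨i, h⟩ else ∅
  let D : ι → Set X := fun i => Dfull (f i) i
  have hDval : ∀ i, D i = E (f i) ⟨i, rfl⟩ := by
    intro i
    simp only [D, Dfull, dif_pos rfl]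
  have hDsubW : ∀ i, D i ⊆ W (f i).1 := by
    intro i
    rw [hDval i, ← hE3 (f i)]
    exact subset_iUnion _ _
  refine ⟨D, ?_, ?_, ?_⟩
  · intro i
    have h1 := hE1 (f i) ⟨i, rfl⟩
    refine ⟨?_, ?_, (hDsubW i).trans (hW1 _).2.1,
      fun y hy z hz => (hW1 (f i).1).2.2 y (hDsubW i hy) z (hDsubW i hz)⟩
    · rw [hDval i]; exact h1.1
    · rw [hDval i]; exact h1.2
  · intro i j hij
    rcases eq_or_ne (f i) (f j) with h | h
    · have hi : D i = Dfull (f j) i := by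
        show Dfull (f i) i = Dfull (f j) i
        rw [h]
      rw [hDval j]
      have : D i = E (f j) ⟨i, h⟩ := by
        simp only [hi, Dfull, dif_pos h]
      rw [this]
      exact hE2 (f j) _ _ (fun he => hij (congrArg Subtype.val he))
    · exact ((hW2 (f i).1 (f j).1 (fun hv => h (Subtype.ext hv))).mono (hDsubW i) (hDsubW j))
  · apply subset_antisymm
    · exact iUnion_subset fun i => (hDsubW i).trans (hW1 _).2.1
    · intro x hx
      rw [← hW3] at hx
      obtain ⟨i, hi⟩ := mem_iUnion.1 hx
      have hiK : i ∈ K := (hKmem i).2 ⟨x, hi⟩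
      set k : ↥K := ⟨i, hiK⟩
      have : x ∈ ⋃ t, E k t := by rw [hE3 k]; exact hi
      obtain ⟨⟨j, hj⟩, hjx⟩ := mem_iUnion.1 this
      refine mem_iUnion.2 ⟨j, ?_⟩
      have : D j = E k ⟨j, hj⟩ := by
        show Dfull (f j) j = E k ⟨j, hj⟩
        rw [show f j = k from hj]
        simp only [Dfull, dif_pos hj]
      rw [this]
      exact hjx

/-- A partition of `X` into nonempty clopen cells, where the cell of a point `x : ℕ → Bool`
depends only on the first `n` coordinates. -/
structure Partn (X : Type) [TopologicalSpace X] where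
  n : ℕ
  Q : (ℕ → Bool) → Set X
  ne : ∀ x, (Q x).Nonempty
  clopen : ∀ x, IsClopen (Q x)
  loc : ∀ x y, (∀ i < n, x i = y i) → Q x = Q y
  disj : ∀ x y, (∃ i < n, x i ≠ y i) → Disjoint (Q x) (Q y)

theorem step (hperf : ∀ x : X, ¬ IsOpen ({x} : Set X)) (P : Partn X) {ε : ℝ} (hε : 0 < ε) :
    ∃ P' : Partn X, P.n < P'.n ∧
      (∀ x, ∀ y ∈ P'.Q x, ∀ z ∈ P'.Q x, dist y z ≤ ε) ∧
      (∀ x, P'.Q x ⊆ P.Q x) ∧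
      (∀ x, P.Q x = ⋃ y ∈ {y : ℕ → Bool | ∀ i < P.n, y i = x i}, P'.Q y) := by
  classical
  set S := (Fin P.n → Bool)
  -- the extension of a cell index to a full sequence
  let ext : S → (ℕ → Bool) := fun s i => if h : i < P.n then s ⟨i, h⟩ else false
  -- bound for all cells
  have hcell : ∀ s : S, ∃ n₀ : ℕ, ∀ (ι : Type) [Fintype ι] [Nonempty ι], n₀ ≤ Fintype.card ι →
      ∃ D : ι → Set X,
        (∀ i, IsClopen (D i) ∧ (D i).Nonempty ∧ D i ⊆ P.Q (ext s) ∧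
          ∀ y ∈ D i, ∀ z ∈ D i, dist y z ≤ ε) ∧
        (∀ i j, i ≠ j → Disjoint (D i) (D j)) ∧ ⋃ i, D i = P.Q (ext s) :=
    fun s => master hperf (P.clopen (ext s)) (P.ne (ext s)) hε
  choose n₀ hn₀ using hcell
  set M : ℕ := max 1 (Finset.univ.sup n₀) with hM
  have hM1 : 1 ≤ M := le_max_left _ _
  have hMn₀ : ∀ s : S, n₀ s ≤ Fintype.card (Fin M → Bool) := by
    intro s
    have h1 : n₀ s ≤ M := le_trans (Finset.le_sup (Finset.mem_univ s)) (le_max_right _ _)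
    have h2 : M ≤ 2 ^ M := Nat.le_of_lt (Nat.lt_two_pow_self (n := M))
    simp only [Fintype.card_fun, Fintype.card_bool, Fintype.card_fin]
    omega
  have hD := fun s : S => hn₀ s (Fin M → Bool) (hMn₀ s)
  choose D hD1 hD2 hD3 using hD
  -- index maps
  let hd : (ℕ → Bool) → S := fun x => fun i : Fin P.n => x i.1
  let tl : (ℕ → Bool) → (Fin M → Bool) := fun x => fun j : Fin M => x (P.n + j.1)
  have hext : ∀ x, P.Q (ext (hd x)) = P.Q x := by
    intro x
    apply P.loc
    intro i hi
    simp only [ext, hd, dif_pos hi]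
  have hQsub : ∀ x, D (hd x) (tl x) ⊆ P.Q x := by
    intro x
    exact ((hD1 (hd x) (tl x)).2.2.1).trans (hext x).le
  have hloc : ∀ x y : ℕ → Bool, (∀ i < P.n + M, x i = y i) →
      D (hd x) (tl x) = D (hd y) (tl y) := by
    intro x y h
    have h1 : hd x = hd y := funext fun i => h i.1 (by have := i.2; omega)
    have h2 : tl x = tl y := funext fun j => h (P.n + j.1) (by have := j.2; omega)
    rw [h1, h2]
  have hdisj : ∀ x y : ℕ → Bool, (∃ i < P.n + M, x i ≠ y i) →
      Disjoint (D (hd x) (tl x)) (D (hd y) (tl y)) := by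
    intro x y ⟨i, hi, hxy⟩
    by_cases h : ∃ j < P.n, x j ≠ y j
    · exact (P.disj x y h).mono (hQsub x) (hQsub y)
    · push_neg at h
      have hS : hd x = hd y := funext fun j => h j.1 j.2
      have hiP : ¬ i < P.n := fun hc => hxy (h i hc)
      have htl : tl x ≠ tl y := by
        intro hc
        apply hxy
        have := congrFun hc ⟨i - P.n, by omega⟩
        simpa only [tl, Nat.add_sub_cancel' (Nat.not_lt.1 hiP)] using this
      have hEq : D (hd x) (tl x) = D (hd y) (tl x) := by rw [hS]
      rw [hEq]
      exact hD2 (hd y) (tl x) (tl y) htl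
  refine ⟨⟨P.n + M, fun x => D (hd x) (tl x),
      fun x => (hD1 (hd x) (tl x)).2.1,
      fun x => (hD1 (hd x) (tl x)).1, hloc, hdisj⟩,
      by simpa using by omega, ?_, hQsub, ?_⟩
  · -- small
    intro x
    exact fun y hy z hz => (hD1 (hd x) (tl x)).2.2.2 y hy z hz
  · -- cover
    intro x
    apply subset_antisymm
    · intro pt hpt
      have : pt ∈ ⋃ t, D (hd x) t := by
        rw [hD3 (hd x), hext x]
        exact hpt
      obtain ⟨t, ht⟩ := mem_iUnion.1 this
      set y : ℕ → Bool := fun i =>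
        if h : i < P.n then x i else if h2 : i - P.n < M then t ⟨i - P.n, h2⟩ else false with hy
      have hyx : ∀ i < P.n, y i = x i := fun i hi => by simp only [hy, dif_pos hi]
      have hhd : hd y = hd x := funext fun i => hyx i.1 i.2
      have htl : tl y = t := by
        funext j
        have hj1 : ¬ (P.n + j.1 < P.n) := by omega
        have hj2 : P.n + j.1 - P.n < M := by have := j.2; omega
        simp only [tl, hy, dif_neg hj1, dif_pos hj2]
        congr 1
        ext
        simp only [Nat.add_sub_cancel_left]
      have hDeq : D (hd y) (tl y) = D (hd x) t := by rw [hhd, htl]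
      refine mem_biUnion (show y ∈ {y : ℕ → Bool | ∀ i < P.n, y i = x i} from hyx) ?_
      show pt ∈ D (hd y) (tl y)
      rw [hDeq]
      exact ht
    · refine iUnion₂_subset fun y hy => ?_
      refine (hQsub y).trans ?_
      exact (P.loc y x (fun i hi => hy i hi)).le

variable [Nonempty X]

/-- The base partition: one cell, the whole space. -/
def basePartn : Partn X where
  n := 0
  Q := fun _ => univ
  ne := fun _ => univ_nonempty
  clopen := fun _ => isClopen_univ
  loc := fun _ _ _ => rfl
  disj := fun _ _ h => absurd h (by simp)

/-- The chain of finer and finer partitions. -/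
noncomputable def chain (hperf : ∀ x : X, ¬ IsOpen ({x} : Set X)) : ℕ → Partn X
  | 0 => basePartn
  | k + 1 => (step hperf (chain hperf k) (by positivity : (0:ℝ) < (1/2)^k)).choose

theorem chain_spec (hperf : ∀ x : X, ¬ IsOpen ({x} : Set X)) (k : ℕ) :
    (chain hperf k).n < (chain hperf (k+1)).n ∧
      (∀ x, ∀ y ∈ (chain hperf (k+1)).Q x, ∀ z ∈ (chain hperf (k+1)).Q x,
        dist y z ≤ (1/2)^k) ∧
      (∀ x, (chain hperf (k+1)).Q x ⊆ (chain hperf k).Q x) ∧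
      (∀ x, (chain hperf k).Q x =
        ⋃ y ∈ {y : ℕ → Bool | ∀ i < (chain hperf k).n, y i = x i}, (chain hperf (k+1)).Q y) :=
  (step hperf (chain hperf k) (by positivity : (0:ℝ) < (1/2)^k)).choose_spec

theorem chain_zero_n (hperf : ∀ x : X, ¬ IsOpen ({x} : Set X)) : (chain (X := X) hperf 0).n = 0 := rfl

theorem chain_zero_Q (hperf : ∀ x : X, ¬ IsOpen ({x} : Set X)) (x : ℕ → Bool) :
    (chain (X := X) hperf 0).Q x = univ := rfl

theorem chain_n_strictMono (hperf : ∀ x : X, ¬ IsOpen ({x} : Set X)) :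
    StrictMono fun k => (chain (X := X) hperf k).n :=
  strictMono_nat_of_lt_succ fun k => (chain_spec hperf k).1

theorem chain_n_le (hperf : ∀ x : X, ¬ IsOpen ({x} : Set X)) (k : ℕ) :
    k ≤ (chain (X := X) hperf k).n :=
  (chain_n_strictMono hperf).le_apply

theorem chain_sub (hperf : ∀ x : X, ¬ IsOpen ({x} : Set X)) {j k : ℕ} (hjk : j ≤ k)
    (x : ℕ → Bool) : (chain (X := X) hperf k).Q x ⊆ (chain hperf j).Q x := by
  induction k with
  | zero => rw [Nat.le_zero.1 hjk]
  | succ k ih =>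
    rcases Nat.lt_or_ge j (k+1) with h | h
    · exact ((chain_spec hperf k).2.2.1 x).trans (ih (by omega))
    · rw [Nat.le_antisymm hjk h]


lemma chain_small (hperf : ∀ x : X, ¬ IsOpen ({x} : Set X)) (k : ℕ) :
    ∀ x, ∀ y ∈ (chain (X := X) hperf (k+1)).Q x, ∀ z ∈ (chain hperf (k+1)).Q x,
      dist y z ≤ (1/2)^k := (chain_spec hperf k).2.1

section Scheme

variable (hperf : ∀ x : X, ¬ IsOpen ({x} : Set X))

lemma mstage_ex (n : ℕ) : ∃ k, n ≤ (chain (X := X) hperf k).n := ⟨n, chain_n_le hperf n⟩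

/-- The first stage whose partition has depth at least `n`. -/
noncomputable def mstage (n : ℕ) : ℕ := Nat.find (mstage_ex hperf n)

lemma le_N_mstage (n : ℕ) : n ≤ (chain (X := X) hperf (mstage hperf n)).n :=
  Nat.find_spec (mstage_ex hperf n)

lemma N_lt_of_lt_mstage {n k : ℕ} (h : k < mstage (X := X) hperf n) :
    (chain (X := X) hperf k).n < n :=
  Nat.lt_of_not_le (Nat.find_min (mstage_ex hperf n) h)

lemma mstage_le {n k : ℕ} (h : n ≤ (chain (X := X) hperf k).n) : mstage (X := X) hperf n ≤ k :=
  Nat.find_le h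

lemma mstage_zero : mstage (X := X) hperf 0 = 0 :=
  Nat.le_zero.1 (mstage_le hperf (Nat.zero_le _))

lemma mstage_mono {n n' : ℕ} (h : n ≤ n') : mstage (X := X) hperf n ≤ mstage hperf n' :=
  mstage_le hperf (h.trans (le_N_mstage hperf n'))

lemma mstage_succ_le (n : ℕ) : mstage (X := X) hperf (n+1) ≤ mstage hperf n + 1 := by
  apply mstage_le
  have h1 : (chain (X := X) hperf (mstage hperf n)).n < (chain hperf (mstage hperf n + 1)).n :=
    chain_n_strictMono hperf (Nat.lt_succ_self _)
  have h2 := le_N_mstage hperf (X := X) n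
  omega

lemma mstage_N (k : ℕ) : mstage (X := X) hperf ((chain (X := X) hperf k).n) = k := by
  apply le_antisymm (mstage_le hperf le_rfl)
  by_contra h
  push_neg at h
  have h1 : (chain (X := X) hperf (mstage hperf ((chain (X := X) hperf k).n))).n <
      (chain (X := X) hperf k).n := chain_n_strictMono hperf h
  have h2 := le_N_mstage (X := X) hperf ((chain (X := X) hperf k).n)
  omega

/-- The Cantor scheme built from the chain of partitions. -/
noncomputable def scheme (l : List Bool) : Set X :=
  ⋃ y ∈ {y : ℕ → Bool | res y l.length = l}, (chain hperf (mstage hperf l.length)).Q y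

lemma res_surj : ∀ l : List Bool, ∃ y : ℕ → Bool, res y l.length = l := by
  intro l
  induction l with
  | nil => exact ⟨fun _ => false, rfl⟩
  | cons a l ih =>
    obtain ⟨y, hy⟩ := ih
    refine ⟨fun i => if i = l.length then a else y i, ?_⟩
    rw [List.length_cons, res_succ, if_pos rfl]
    congr 1
    have : res (fun i => if i = l.length then a else y i) l.length = res y l.length :=
      res_eq_res.2 fun m hm => by rw [if_neg (Nat.ne_of_lt hm)]
    rw [this, hy]

lemma mem_scheme_iff {pt : X} {l : List Bool} :
    pt ∈ scheme hperf l ↔ ∃ y : ℕ → Bool, res y l.length = l ∧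
      pt ∈ (chain hperf (mstage (X := X) hperf l.length)).Q y := by
  simp only [scheme, mem_iUnion, exists_prop, mem_setOf_eq]

lemma scheme_nonempty (l : List Bool) : (scheme (X := X) hperf l).Nonempty := by
  obtain ⟨y, hy⟩ := res_surj l
  obtain ⟨pt, hpt⟩ := (chain (X := X) hperf (mstage hperf l.length)).ne y
  exact ⟨pt, (mem_scheme_iff hperf).2 ⟨y, hy, hpt⟩⟩

lemma scheme_nil : scheme (X := X) hperf [] = univ := by
  apply eq_univ_of_forall
  intro pt
  refine (mem_scheme_iff hperf).2 ⟨fun _ => false, rfl, ?_⟩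
  rw [show (List.length ([] : List Bool)) = 0 from rfl, mstage_zero hperf, chain_zero_Q hperf]
  trivial

lemma scheme_anti (a : Bool) (l : List Bool) :
    scheme (X := X) hperf (a :: l) ⊆ scheme hperf l := by
  intro pt hpt
  obtain ⟨y, hy, hmem⟩ := (mem_scheme_iff hperf).1 hpt
  rw [List.length_cons, res_succ] at hy
  refine (mem_scheme_iff hperf).2 ⟨y, (List.cons_eq_cons.1 hy).2, ?_⟩
  exact chain_sub hperf (mstage_mono hperf (Nat.le_succ _)) y hmem

lemma scheme_disjoint {a b : Bool} (hab : a ≠ b) (l : List Bool) :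
    Disjoint (scheme (X := X) hperf (a :: l)) (scheme hperf (b :: l)) := by
  rw [Set.disjoint_left]
  intro pt hpta hptb
  obtain ⟨y, hy, hmy⟩ := (mem_scheme_iff hperf).1 hpta
  obtain ⟨z, hz, hmz⟩ := (mem_scheme_iff hperf).1 hptb
  rw [List.length_cons, res_succ] at hy hz
  have hya : y l.length = a := (List.cons_eq_cons.1 hy).1
  have hzb : z l.length = b := (List.cons_eq_cons.1 hz).1
  have hlen : l.length < (chain (X := X) hperf (mstage hperf (l.length + 1))).n :=
    le_N_mstage hperf (l.length + 1)
  have hd := (chain (X := X) hperf (mstage hperf (l.length + 1))).disj y z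
    ⟨l.length, hlen, by rw [hya, hzb]; exact hab⟩
  rw [List.length_cons] at hmy hmz
  exact (Set.disjoint_left.1 hd) hmy hmz

lemma scheme_cover (l : List Bool) :
    scheme (X := X) hperf l = scheme hperf (false :: l) ∪ scheme hperf (true :: l) := by
  set n := l.length
  have hrhs : scheme (X := X) hperf (false :: l) ∪ scheme hperf (true :: l) =
      ⋃ y ∈ {y : ℕ → Bool | res y n = l}, (chain hperf (mstage hperf (n+1))).Q y := by
    apply subset_antisymm
    · rintro pt (h | h) <;>
      · obtain ⟨y, hy, hmy⟩ := (mem_scheme_iff hperf).1 h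
        rw [List.length_cons, res_succ] at hy
        rw [List.length_cons] at hmy
        exact mem_biUnion ((List.cons_eq_cons.1 hy).2) hmy
    · intro pt hpt
      obtain ⟨y, hy, hmy⟩ := by
        simpa only [mem_iUnion, exists_prop, mem_setOf_eq] using hpt
      rcases Bool.dichotomy (y n) with hb | hb
      · exact Or.inl ((mem_scheme_iff hperf).2 ⟨y, by rw [List.length_cons, res_succ, hb, hy], hmy⟩)
      · exact Or.inr ((mem_scheme_iff hperf).2 ⟨y, by rw [List.length_cons, res_succ, hb, hy], hmy⟩)
  rw [hrhs]
  rcases Nat.lt_or_ge ((chain (X := X) hperf (mstage hperf n)).n) (n+1) with h | h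
  · -- checkpoint: N (mstage n) = n, mstage (n+1) = mstage n + 1
    have hNn : (chain (X := X) hperf (mstage hperf n)).n = n :=
      le_antisymm (by omega) (le_N_mstage hperf n)
    have hm1 : mstage (X := X) hperf (n+1) = mstage hperf n + 1 := by
      refine le_antisymm (mstage_succ_le hperf n) ?_
      have := mstage_mono (X := X) hperf (Nat.le_succ n)
      rcases Nat.lt_or_ge (mstage (X := X) hperf n) (mstage hperf (n+1)) with h' | h'
      · omega
      · exfalso
        have := le_N_mstage hperf (X := X) (n+1)
        have h2 : (chain (X := X) hperf (mstage hperf (n+1))).n ≤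
            (chain (X := X) hperf (mstage hperf n)).n :=
          (chain_n_strictMono hperf).monotone h'
        omega
    set k := mstage (X := X) hperf n
    apply subset_antisymm
    · intro pt hpt
      obtain ⟨y, hy, hmy⟩ := (mem_scheme_iff hperf).1 hpt
      rw [(chain_spec hperf k).2.2.2 y] at hmy
      obtain ⟨z, hz, hmz⟩ := by
        simpa only [mem_iUnion, exists_prop, mem_setOf_eq] using hmy
      have hzres : res z n = l := by
        rw [← hy]
        exact res_eq_res.2 fun m hm => hz m (by omega)
      refine mem_biUnion hzres ?_
      rw [hm1]
      exact hmz
    · intro pt hpt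
      obtain ⟨z, hz, hmz⟩ := by
        simpa only [mem_iUnion, exists_prop, mem_setOf_eq] using hpt
      refine (mem_scheme_iff hperf).2 ⟨z, hz, ?_⟩
      rw [hm1] at hmz
      exact chain_sub hperf (Nat.le_succ k) z hmz
  · -- no checkpoint: mstage (n+1) = mstage n
    have : mstage (X := X) hperf (n+1) = mstage hperf n :=
      le_antisymm (mstage_le hperf h) (mstage_mono hperf (Nat.le_succ n))
    rw [this]
    rfl

lemma scheme_closed (l : List Bool) : IsClosed (scheme (X := X) hperf l) := by
  classical
  set n := l.length
  set μ := mstage (X := X) hperf n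
  set Nμ := (chain (X := X) hperf μ).n with hNμ
  have hn : n ≤ Nμ := le_N_mstage hperf n
  set exts : (Fin Nμ → Bool) → (ℕ → Bool) :=
    fun s i => if h : i < Nμ then s ⟨i, h⟩ else false with hexts
  have key : scheme (X := X) hperf l =
      ⋃ s : Fin Nμ → Bool,
        (if res (exts s) n = l then (chain hperf μ).Q (exts s) else ∅) := by
    apply subset_antisymm
    · intro pt hpt
      obtain ⟨y, hy, hmy⟩ := (mem_scheme_iff hperf).1 hpt
      refine mem_iUnion.2 ⟨fun i : Fin Nμ => y i.1, ?_⟩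
      have hagree : ∀ i < Nμ, exts (fun i : Fin Nμ => y i.1) i = y i := by
        intro i hi
        simp only [hexts, dif_pos hi]
      have hres : res (exts (fun i : Fin Nμ => y i.1)) n = l := by
        rw [← hy]
        exact res_eq_res.2 fun m hm => hagree m (by omega)
      rw [if_pos hres, (chain (X := X) hperf μ).loc _ y hagree]
      exact hmy
    · intro pt hpt
      obtain ⟨s, hs⟩ := mem_iUnion.1 hpt
      by_cases h : res (exts s) n = l
      · rw [if_pos h] at hs
        exact (mem_scheme_iff hperf).2 ⟨exts s, h, hs⟩
      · rw [if_neg h] at hs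
        exact absurd hs (notMem_empty pt)
  rw [key]
  apply isClosed_iUnion_of_finite
  intro s
  by_cases h : res (exts s) n = l
  · rw [if_pos h]; exact ((chain (X := X) hperf μ).clopen _).1
  · rw [if_neg h]; exact isClosed_empty

lemma scheme_checkpoint (k : ℕ) (x : ℕ → Bool) :
    scheme (X := X) hperf (res x ((chain (X := X) hperf k).n)) = (chain hperf k).Q x := by
  set Nk := (chain (X := X) hperf k).n
  have hlen : (res x Nk).length = Nk := res_length x Nk
  apply subset_antisymm
  · intro pt hpt
    obtain ⟨y, hy, hmy⟩ := (mem_scheme_iff hperf).1 hpt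
    rw [hlen] at hy hmy
    rw [mstage_N hperf k] at hmy
    rw [(chain (X := X) hperf k).loc y x (res_eq_res.1 hy)] at hmy
    exact hmy
  · intro pt hpt
    refine (mem_scheme_iff hperf).2 ⟨x, by rw [hlen], ?_⟩
    rw [hlen, mstage_N hperf k]
    exact hpt

end Scheme

section Main
variable {hperf₀ : Unit}
section Lem
variable (hperf : ∀ x : X, ¬ IsOpen ({x} : Set X))

lemma scheme_res_anti (x : ℕ → Bool) {n n' : ℕ} (h : n ≤ n') :
    scheme (X := X) hperf (res x n') ⊆ scheme hperf (res x n) := by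
  induction n' with
  | zero => rw [Nat.le_zero.1 h]
  | succ n' ih =>
    rcases Nat.lt_or_ge n (n'+1) with h' | h'
    · rw [res_succ]
      exact (scheme_anti hperf _ _).trans (ih (by omega))
    · rw [Nat.le_antisymm h h']

lemma scheme_vanishing : VanishingDiam (scheme (X := X) hperf) := by
  intro x
  rw [ENNReal.tendsto_atTop_zero]
  intro ε hε
  -- find k with ofReal ((1/2)^k) ≤ ε
  have htend : Tendsto (fun k : ℕ => ENNReal.ofReal ((1/2)^k)) atTop (𝓝 0) := by
    have h0 : (0 : ℝ≥0∞) = ENNReal.ofReal 0 := by simp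
    rw [h0]
    exact ENNReal.tendsto_ofReal
      (tendsto_pow_atTop_nhds_zero_of_lt_one (by norm_num) (by norm_num))
  rw [ENNReal.tendsto_atTop_zero] at htend
  obtain ⟨k, hk⟩ := htend ε hε
  refine ⟨(chain (X := X) hperf (k+1)).n, fun n hn => ?_⟩
  have h1 : scheme (X := X) hperf (res x n) ⊆ (chain hperf (k+1)).Q x := by
    rw [← scheme_checkpoint hperf (k+1) x]
    exact scheme_res_anti hperf x hn
  have h2 : EMetric.diam ((chain (X := X) hperf (k+1)).Q x) ≤ ENNReal.ofReal ((1/2)^k) := by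
    apply EMetric.diam_le
    intro y hy z hz
    rw [edist_dist]
    exact ENNReal.ofReal_le_ofReal (chain_small hperf k x y hy z hz)
  exact le_trans (le_trans (EMetric.diam_mono h1) h2) (hk k le_rfl)

/-- The branch of a point through the scheme. -/
noncomputable def branch (pt : X) : (n : ℕ) → {l : List Bool // l.length = n ∧ pt ∈ scheme hperf l}
  | 0 => ⟨[], rfl, by rw [scheme_nil]; trivial⟩
  | n+1 =>
    haveI := Classical.dec (pt ∈ scheme hperf (false :: (branch pt n).1))
    if h : pt ∈ scheme hperf (false :: (branch pt n).1) then
      ⟨false :: (branch pt n).1, by simp [(branch pt n).2.1], h⟩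
    else
      ⟨true :: (branch pt n).1, by simp [(branch pt n).2.1], by
        have hc := (branch pt n).2.2
        rw [scheme_cover hperf (branch pt n).1] at hc
        rcases hc with h' | h'
        · exact absurd h' h
        · exact h'⟩

lemma branch_succ (pt : X) (n : ℕ) :
    ∃ b, (branch hperf pt (n+1)).1 = b :: (branch hperf pt n).1 := by
  rw [branch]
  split
  · exact ⟨false, rfl⟩
  · exact ⟨true, rfl⟩

lemma branch_res (pt : X) :
    ∀ n, res (fun m => (branch hperf pt (m+1)).1.headI) n = (branch hperf pt n).1 := by
  intro n
  induction n with
  | zero => exact ((branch hperf pt 0).2.1 ▸ rfl)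
  | succ n ih =>
    obtain ⟨b, hb⟩ := branch_succ hperf pt n
    rw [res_succ, ih, hb]
    simp

end Lem

theorem main (hperf : ∀ x : X, ¬ IsOpen ({x} : Set X)) : Nonempty ((ℕ → Bool) ≃ₜ X) := by
  set A := scheme (X := X) hperf with hA
  have hanti : CantorScheme.Antitone A := fun l a => scheme_anti hperf a l
  have hclos : ClosureAntitone A := hanti.closureAntitone (fun l => scheme_closed hperf l)
  have hvan : VanishingDiam A := scheme_vanishing hperf
  have hdisj : CantorScheme.Disjoint A := fun l => fun a b hab => scheme_disjoint hperf hab l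
  have htot : (inducedMap A).1 = univ :=
    hclos.map_of_vanishingDiam hvan (fun l => scheme_nonempty hperf l)
  have hmem : ∀ x : ℕ → Bool, x ∈ (inducedMap A).1 := fun x => htot ▸ mem_univ x
  set f : (ℕ → Bool) → X := fun x => (inducedMap A).2 ⟨x, hmem x⟩ with hf
  have hcont : Continuous f := (hvan.map_continuous).comp (Continuous.subtype_mk continuous_id _)
  have hinj : Function.Injective f := by
    intro x y hxy
    have h2 : ((⟨x, hmem x⟩ : (inducedMap A).1) : ℕ → Bool) = (⟨y, hmem y⟩ : (inducedMap A).1) :=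
      congrArg Subtype.val (hdisj.map_injective hxy)
    exact h2
  have hsurj : Function.Surjective f := by
    intro pt
    set x : ℕ → Bool := fun m => (branch hperf pt (m+1)).1.headI with hx
    refine ⟨x, ?_⟩
    have hptmem : ∀ n, pt ∈ A (res x n) := by
      intro n
      rw [hA, branch_res hperf pt n]
      exact (branch hperf pt n).2.2
    have hfmem : ∀ n, f x ∈ A (res x n) := fun n => map_mem ⟨x, hmem x⟩ n
    have hdist : ∀ k : ℕ, dist (f x) pt ≤ (1/2)^k := by
      intro k
      have hsub : A (res x ((chain (X := X) hperf (k+1)).n)) ⊆ (chain hperf (k+1)).Q x := by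
        rw [hA, scheme_checkpoint hperf (k+1) x]
      exact chain_small hperf k x _ (hsub (hfmem _)) _ (hsub (hptmem _))
    have hle : dist (f x) pt ≤ 0 := by
      refine ge_of_tendsto (tendsto_pow_atTop_nhds_zero_of_lt_one
        (by norm_num : (0:ℝ) ≤ 1/2) (by norm_num)) ?_
      exact Eventually.of_forall hdist
    exact dist_le_zero.1 hle
  exact ⟨Continuous.homeoOfEquivCompactToT2 (f := Equiv.ofBijective f ⟨hinj, hsurj⟩) hcont⟩

end Main

end BrouwerCantor

/-- A topological space is homeomorphic to the Cantor set `{0,1}^ℕ` if and only if it is a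
nonempty, second countable, compact, Hausdorff, totally disconnected space with no
isolated points. -/
theorem homeomorph_cantor_iff (X : Type) [TopologicalSpace X] :
    Nonempty (X ≃ₜ (ℕ → Bool)) ↔
      (Nonempty X ∧ SecondCountableTopology X ∧ CompactSpace X ∧ T2Space X ∧
        TotallyDisconnectedSpace X ∧ ∀ x : X, ¬ IsOpen ({x} : Set X)) := by
  constructor
  · rintro ⟨e⟩
    have he := e.isEmbedding
    refine ⟨⟨e.symm (fun _ => false)⟩, he.secondCountableTopology, e.symm.compactSpace,
      he.t2Space, ?_, ?_⟩
    · exact he.isTotallyDisconnected_range.1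
        (isTotallyDisconnected_of_totallyDisconnectedSpace _)
    · intro x hx
      have h1 : IsOpen (e '' {x}) := e.isOpenMap _ hx
      rw [Set.image_singleton] at h1
      exact BrouwerCantor.cantor_not_isOpen_singleton (e x) h1
  · rintro ⟨hne, hsc, hcomp, ht2, htd, hperf⟩
    haveI := hne
    haveI := hsc
    haveI := hcomp
    haveI := ht2
    haveI := htd
    letI : MetricSpace X := TopologicalSpace.metrizableSpaceMetric X
    obtain ⟨e⟩ := BrouwerCantor.main hperf
    exact ⟨e.symm⟩
end

section
/- Let G = G₁ × G₂ be a profinite group with projections π onto G₁ and ρ onto G₂, and let H be a closed subgroup of G. Then π(H) = HG₂ ∩ G₁, H ∩ G₁ is a closed normal subgroup of HG₂ ∩ G₁, (H ∩ G₁) × (H ∩ G₂) is a closed normal subgroup of H, and there are topological group isomorphisms (HG₂ ∩ G₁)/(H ∩ G₁) ≅ (HG₁ ∩ G₂)/(H ∩ G₂) ≅ H/((H ∩ G₁) × (H ∩ G₂)). -/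
section GoursatAux
variable {G₁ G₂ : Type*} [Group G₁] [Group G₂]

lemma goursat_mem_A {p : G₁ × G₂} :
    p ∈ (⊤ : Subgroup G₁).prod (⊥ : Subgroup G₂) ↔ p.2 = 1 := by
  simp [Subgroup.mem_prod]

lemma goursat_mem_B {p : G₁ × G₂} :
    p ∈ (⊥ : Subgroup G₁).prod (⊤ : Subgroup G₂) ↔ p.1 = 1 := by
  simp [Subgroup.mem_prod]

variable (H : Subgroup (G₁ × G₂))

lemma goursat_mem_supB_inf_A {p : G₁ × G₂} :
    p ∈ (H ⊔ (⊥ : Subgroup G₁).prod ⊤) ⊓ (⊤ : Subgroup G₁).prod ⊥ ↔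
      (∃ y, (p.1, y) ∈ H) ∧ p.2 = 1 := by
  rw [Subgroup.mem_inf, goursat_mem_A]
  have hB : H ⊔ (⊥ : Subgroup G₁).prod ⊤ =
      Subgroup.comap (MonoidHom.fst G₁ G₂) (Subgroup.map (MonoidHom.fst G₁ G₂) H) := by
    rw [Subgroup.comap_map_eq, MonoidHom.ker_fst]
  rw [hB, Subgroup.mem_comap, Subgroup.mem_map]
  constructor
  · rintro ⟨⟨q, hq, hq1⟩, h2⟩
    exact ⟨⟨q.2, by rwa [show (p.1, q.2) = q from Prod.ext hq1.symm rfl]⟩, h2⟩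
  · rintro ⟨⟨y, hy⟩, h2⟩
    exact ⟨⟨(p.1, y), hy, rfl⟩, h2⟩

lemma goursat_mem_supA_inf_B {p : G₁ × G₂} :
    p ∈ (H ⊔ (⊤ : Subgroup G₁).prod ⊥) ⊓ (⊥ : Subgroup G₁).prod ⊤ ↔
      (∃ x, (x, p.2) ∈ H) ∧ p.1 = 1 := by
  rw [Subgroup.mem_inf, goursat_mem_B]
  have hA : H ⊔ (⊤ : Subgroup G₁).prod ⊥ =
      Subgroup.comap (MonoidHom.snd G₁ G₂) (Subgroup.map (MonoidHom.snd G₁ G₂) H) := by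
    rw [Subgroup.comap_map_eq, MonoidHom.ker_snd]
  rw [hA, Subgroup.mem_comap, Subgroup.mem_map]
  constructor
  · rintro ⟨⟨q, hq, hq2⟩, h1⟩
    exact ⟨⟨q.1, by rwa [show (q.1, p.2) = q from Prod.ext rfl hq2.symm]⟩, h1⟩
  · rintro ⟨⟨x, hx⟩, h1⟩
    exact ⟨⟨(x, p.2), hx, rfl⟩, h1⟩

lemma goursat_eq_A :
    Subgroup.map (MonoidHom.inl G₁ G₂) (Subgroup.map (MonoidHom.fst G₁ G₂) H)
      = (H ⊔ (⊥ : Subgroup G₁).prod ⊤) ⊓ (⊤ : Subgroup G₁).prod ⊥ := by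
  ext p
  rw [goursat_mem_supB_inf_A]
  simp only [Subgroup.mem_map]
  constructor
  · rintro ⟨x, ⟨q, hq, rfl⟩, rfl⟩
    exact ⟨⟨q.2, by simpa using hq⟩, rfl⟩
  · rintro ⟨⟨y, hy⟩, h2⟩
    exact ⟨p.1, ⟨(p.1, y), hy, rfl⟩, Prod.ext rfl h2.symm⟩

lemma goursat_eq_B :
    Subgroup.map (MonoidHom.inr G₁ G₂) (Subgroup.map (MonoidHom.snd G₁ G₂) H)
      = (H ⊔ (⊤ : Subgroup G₁).prod ⊥) ⊓ (⊥ : Subgroup G₁).prod ⊤ := by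
  ext p
  rw [goursat_mem_supA_inf_B]
  simp only [Subgroup.mem_map]
  constructor
  · rintro ⟨x, ⟨q, hq, rfl⟩, rfl⟩
    exact ⟨⟨q.1, by simpa using hq⟩, rfl⟩
  · rintro ⟨⟨x, hx⟩, h1⟩
    exact ⟨p.2, ⟨(x, p.2), hx, rfl⟩, Prod.ext h1.symm rfl⟩

lemma goursat_N_eq :
    (H ⊓ (⊤ : Subgroup G₁).prod ⊥) ⊔ (H ⊓ (⊥ : Subgroup G₁).prod ⊤)
      = (H.comap (MonoidHom.inl G₁ G₂)).prod (H.comap (MonoidHom.inr G₁ G₂)) := by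
  apply le_antisymm
  · apply sup_le
    · rintro ⟨x, y⟩ hp
      rw [Subgroup.mem_inf, goursat_mem_A] at hp
      obtain ⟨h1, h2⟩ := hp
      dsimp at h2; subst h2
      exact Subgroup.mem_prod.mpr ⟨h1, by simpa using one_mem H⟩
    · rintro ⟨x, y⟩ hp
      rw [Subgroup.mem_inf, goursat_mem_B] at hp
      obtain ⟨h1, h2⟩ := hp
      dsimp at h2; subst h2
      exact Subgroup.mem_prod.mpr ⟨by simpa using one_mem H, h1⟩
  · rintro ⟨x, y⟩ hp
    rw [Subgroup.mem_prod] at hp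
    obtain ⟨hx, hy⟩ := hp
    have : (x, y) = (x, 1) * (1, y) := by simp
    rw [this]
    exact mul_mem
      (Subgroup.mem_sup_left ⟨hx, goursat_mem_A.mpr rfl⟩)
      (Subgroup.mem_sup_right ⟨hy, goursat_mem_B.mpr rfl⟩)

lemma goursat_mem_N {p : G₁ × G₂} :
    p ∈ (H ⊓ (⊤ : Subgroup G₁).prod ⊥) ⊔ (H ⊓ (⊥ : Subgroup G₁).prod ⊤) ↔
      (p.1, 1) ∈ H ∧ (1, p.2) ∈ H := by
  rw [goursat_N_eq, Subgroup.mem_prod]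
  rfl

end GoursatAux

section GoursatAux2
variable {G₁ G₂ : Type*} [Group G₁] [Group G₂] (H : Subgroup (G₁ × G₂))

instance goursat_normal_A :
    ((H ⊓ (⊤ : Subgroup G₁).prod ⊥).subgroupOf
      ((H ⊔ (⊥ : Subgroup G₁).prod ⊤) ⊓ (⊤ : Subgroup G₁).prod ⊥)).Normal := by
  constructor
  intro n hn g
  rw [Subgroup.mem_subgroupOf] at hn ⊢
  rw [Subgroup.mem_inf] at hn ⊢
  obtain ⟨hnH, hnA⟩ := hn
  rw [goursat_mem_A] at hnA
  obtain ⟨⟨y, hy⟩, hg2⟩ := (goursat_mem_supB_inf_A H).mp g.2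
  have key : ((g : G₁ × G₂) * ↑n * (↑g)⁻¹)
      = ((g : G₁ × G₂).1, y) * ↑n * (((g : G₁ × G₂).1, y))⁻¹ := by
    apply Prod.ext
    · simp
    · simp [hg2, hnA]
  constructor
  · show ((g * n * g⁻¹ : _) : G₁ × G₂) ∈ H
    rw [Subgroup.coe_mul, Subgroup.coe_mul, Subgroup.coe_inv, key]
    exact mul_mem (mul_mem hy hnH) (inv_mem hy)
  · show ((g * n * g⁻¹ : _) : G₁ × G₂) ∈ (⊤ : Subgroup G₁).prod ⊥
    rw [goursat_mem_A, Subgroup.coe_mul, Subgroup.coe_mul, Subgroup.coe_inv]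
    simp [hg2, hnA]

instance goursat_normal_B :
    ((H ⊓ (⊥ : Subgroup G₁).prod ⊤).subgroupOf
      ((H ⊔ (⊤ : Subgroup G₁).prod ⊥) ⊓ (⊥ : Subgroup G₁).prod ⊤)).Normal := by
  constructor
  intro n hn g
  rw [Subgroup.mem_subgroupOf] at hn ⊢
  rw [Subgroup.mem_inf] at hn ⊢
  obtain ⟨hnH, hnB⟩ := hn
  rw [goursat_mem_B] at hnB
  obtain ⟨⟨x, hx⟩, hg1⟩ := (goursat_mem_supA_inf_B H).mp g.2
  have key : ((g : G₁ × G₂) * ↑n * (↑g)⁻¹)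
      = (x, (g : G₁ × G₂).2) * ↑n * ((x, (g : G₁ × G₂).2))⁻¹ := by
    apply Prod.ext
    · simp [hg1, hnB]
    · simp
  constructor
  · show ((g * n * g⁻¹ : _) : G₁ × G₂) ∈ H
    rw [Subgroup.coe_mul, Subgroup.coe_mul, Subgroup.coe_inv, key]
    exact mul_mem (mul_mem hx hnH) (inv_mem hx)
  · show ((g * n * g⁻¹ : _) : G₁ × G₂) ∈ (⊥ : Subgroup G₁).prod ⊤
    rw [goursat_mem_B, Subgroup.coe_mul, Subgroup.coe_mul, Subgroup.coe_inv]
    simp [hg1, hnB]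

instance goursat_normal_N :
    (((H ⊓ (⊤ : Subgroup G₁).prod ⊥) ⊔ (H ⊓ (⊥ : Subgroup G₁).prod ⊤)).subgroupOf H).Normal := by
  constructor
  intro n hn g
  rw [Subgroup.mem_subgroupOf, goursat_mem_N] at hn ⊢
  obtain ⟨h1, h2⟩ := hn
  rw [Subgroup.coe_mul, Subgroup.coe_mul, Subgroup.coe_inv]
  constructor
  · have e1 : ((((g : G₁ × G₂) * ↑n * (↑g)⁻¹)).1, (1 : G₂))
        = (g : G₁ × G₂) * ((n : G₁ × G₂).1, 1) * ((g : G₁ × G₂))⁻¹ := by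
      apply Prod.ext <;> simp
    rw [e1]
    exact mul_mem (mul_mem g.2 h1) (inv_mem g.2)
  · have e2 : ((1 : G₁), (((g : G₁ × G₂) * ↑n * (↑g)⁻¹)).2)
        = (g : G₁ × G₂) * ((1 : G₁), (n : G₁ × G₂).2) * ((g : G₁ × G₂))⁻¹ := by
      apply Prod.ext <;> simp
    rw [e2]
    exact mul_mem (mul_mem g.2 h2) (inv_mem g.2)

/-- The natural hom from `H` to `(H ⊔ B) ⊓ A`, `(x,y) ↦ (x,1)`. -/
def goursatThetaA : ↥H →* ↥((H ⊔ (⊥ : Subgroup G₁).prod ⊤) ⊓ (⊤ : Subgroup G₁).prod ⊥) where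
  toFun h := ⟨((h : G₁ × G₂).1, 1),
    (goursat_mem_supB_inf_A H).mpr ⟨⟨(h : G₁ × G₂).2, by simpa using h.2⟩, rfl⟩⟩
  map_one' := by apply Subtype.ext; apply Prod.ext <;> simp
  map_mul' a b := by apply Subtype.ext; apply Prod.ext <;> simp

def goursatThetaB : ↥H →* ↥((H ⊔ (⊤ : Subgroup G₁).prod ⊥) ⊓ (⊥ : Subgroup G₁).prod ⊤) where
  toFun h := ⟨(1, (h : G₁ × G₂).2),
    (goursat_mem_supA_inf_B H).mpr ⟨⟨(h : G₁ × G₂).1, by simpa using h.2⟩, rfl⟩⟩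
  map_one' := by apply Subtype.ext; apply Prod.ext <;> simp
  map_mul' a b := by apply Subtype.ext; apply Prod.ext <;> simp

def goursatPsiA : ↥H →*
    ↥((H ⊔ (⊥ : Subgroup G₁).prod ⊤) ⊓ (⊤ : Subgroup G₁).prod ⊥) ⧸
      (H ⊓ (⊤ : Subgroup G₁).prod ⊥).subgroupOf
        ((H ⊔ (⊥ : Subgroup G₁).prod ⊤) ⊓ (⊤ : Subgroup G₁).prod ⊥) :=
  (QuotientGroup.mk' _).comp (goursatThetaA H)

def goursatPsiB : ↥H →*
    ↥((H ⊔ (⊤ : Subgroup G₁).prod ⊥) ⊓ (⊥ : Subgroup G₁).prod ⊤) ⧸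
      (H ⊓ (⊥ : Subgroup G₁).prod ⊤).subgroupOf
        ((H ⊔ (⊤ : Subgroup G₁).prod ⊥) ⊓ (⊥ : Subgroup G₁).prod ⊤) :=
  (QuotientGroup.mk' _).comp (goursatThetaB H)

lemma goursatPsiA_surjective : Function.Surjective (goursatPsiA H) := by
  intro q
  obtain ⟨g, rfl⟩ := QuotientGroup.mk'_surjective _ q
  obtain ⟨⟨y, hy⟩, hg2⟩ := (goursat_mem_supB_inf_A H).mp g.2
  refine ⟨⟨((g : G₁ × G₂).1, y), hy⟩, ?_⟩
  have e : (goursatThetaA H) ⟨((g : G₁ × G₂).1, y), hy⟩ = g := by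
    apply Subtype.ext; apply Prod.ext
    · rfl
    · exact hg2.symm
  show QuotientGroup.mk' _ ((goursatThetaA H) _) = QuotientGroup.mk' _ g
  rw [e]

lemma goursatPsiB_surjective : Function.Surjective (goursatPsiB H) := by
  intro q
  obtain ⟨g, rfl⟩ := QuotientGroup.mk'_surjective _ q
  obtain ⟨⟨x, hx⟩, hg1⟩ := (goursat_mem_supA_inf_B H).mp g.2
  refine ⟨⟨(x, (g : G₁ × G₂).2), hx⟩, ?_⟩
  have e : (goursatThetaB H) ⟨(x, (g : G₁ × G₂).2), hx⟩ = g := by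
    apply Subtype.ext; apply Prod.ext
    · exact hg1.symm
    · rfl
  show QuotientGroup.mk' _ ((goursatThetaB H) _) = QuotientGroup.mk' _ g
  rw [e]

lemma goursatPsiA_ker : (goursatPsiA H).ker
    = ((H ⊓ (⊤ : Subgroup G₁).prod ⊥) ⊔ (H ⊓ (⊥ : Subgroup G₁).prod ⊤)).subgroupOf H := by
  ext h
  rw [MonoidHom.mem_ker, Subgroup.mem_subgroupOf, goursat_mem_N]
  show (QuotientGroup.mk' _).comp (goursatThetaA H) h = 1 ↔ _
  rw [MonoidHom.comp_apply, QuotientGroup.mk'_apply, QuotientGroup.eq_one_iff,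
    Subgroup.mem_subgroupOf, Subgroup.mem_inf]
  constructor
  · rintro ⟨h1, -⟩
    refine ⟨h1, ?_⟩
    have e : ((1 : G₁), (h : G₁ × G₂).2)
        = ((((h : G₁ × G₂).1, (1 : G₂)) : G₁ × G₂))⁻¹ * (h : G₁ × G₂) := by
      apply Prod.ext <;> simp
    rw [e]
    exact mul_mem (inv_mem h1) h.2
  · rintro ⟨h1, -⟩
    exact ⟨h1, goursat_mem_A.mpr rfl⟩

lemma goursatPsiB_ker : (goursatPsiB H).ker
    = ((H ⊓ (⊤ : Subgroup G₁).prod ⊥) ⊔ (H ⊓ (⊥ : Subgroup G₁).prod ⊤)).subgroupOf H := by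
  ext h
  rw [MonoidHom.mem_ker, Subgroup.mem_subgroupOf, goursat_mem_N]
  show (QuotientGroup.mk' _).comp (goursatThetaB H) h = 1 ↔ _
  rw [MonoidHom.comp_apply, QuotientGroup.mk'_apply, QuotientGroup.eq_one_iff,
    Subgroup.mem_subgroupOf, Subgroup.mem_inf]
  constructor
  · rintro ⟨h2, -⟩
    refine ⟨?_, h2⟩
    have e : (((h : G₁ × G₂).1), (1 : G₂))
        = (h : G₁ × G₂) * ((((1 : G₁), (h : G₁ × G₂).2) : G₁ × G₂))⁻¹ := by
      apply Prod.ext <;> simp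
    rw [e]
    exact mul_mem h.2 (inv_mem h2)
  · rintro ⟨-, h2⟩
    exact ⟨h2, goursat_mem_B.mpr rfl⟩

noncomputable def goursatEquivA :
    (↥H ⧸ ((H ⊓ (⊤ : Subgroup G₁).prod ⊥) ⊔ (H ⊓ (⊥ : Subgroup G₁).prod ⊤)).subgroupOf H) ≃*
    (↥((H ⊔ (⊥ : Subgroup G₁).prod ⊤) ⊓ (⊤ : Subgroup G₁).prod ⊥) ⧸
      (H ⊓ (⊤ : Subgroup G₁).prod ⊥).subgroupOf
        ((H ⊔ (⊥ : Subgroup G₁).prod ⊤) ⊓ (⊤ : Subgroup G₁).prod ⊥)) :=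
  (QuotientGroup.quotientMulEquivOfEq (goursatPsiA_ker H).symm).trans
    (QuotientGroup.quotientKerEquivOfSurjective _ (goursatPsiA_surjective H))

noncomputable def goursatEquivB :
    (↥H ⧸ ((H ⊓ (⊤ : Subgroup G₁).prod ⊥) ⊔ (H ⊓ (⊥ : Subgroup G₁).prod ⊤)).subgroupOf H) ≃*
    (↥((H ⊔ (⊤ : Subgroup G₁).prod ⊥) ⊓ (⊥ : Subgroup G₁).prod ⊤) ⧸
      (H ⊓ (⊥ : Subgroup G₁).prod ⊤).subgroupOf
        ((H ⊔ (⊤ : Subgroup G₁).prod ⊥) ⊓ (⊥ : Subgroup G₁).prod ⊤)) :=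
  (QuotientGroup.quotientMulEquivOfEq (goursatPsiB_ker H).symm).trans
    (QuotientGroup.quotientKerEquivOfSurjective _ (goursatPsiB_surjective H))

lemma goursatEquivA_mk (h : ↥H) :
    goursatEquivA H (QuotientGroup.mk h) = goursatPsiA H h := by
  show goursatEquivA H _ = _
  unfold goursatEquivA
  rw [MulEquiv.trans_apply, QuotientGroup.quotientMulEquivOfEq_mk]
  rfl

lemma goursatEquivB_mk (h : ↥H) :
    goursatEquivB H (QuotientGroup.mk h) = goursatPsiB H h := by
  unfold goursatEquivB
  rw [MulEquiv.trans_apply, QuotientGroup.quotientMulEquivOfEq_mk]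
  rfl

end GoursatAux2

section GoursatTop
variable {G₁ G₂ : Type*} [Group G₁] [Group G₂]
  [TopologicalSpace G₁] [TopologicalSpace G₂] [IsTopologicalGroup G₁] [IsTopologicalGroup G₂]
  (H : Subgroup (G₁ × G₂))

lemma goursat_closed_A [T2Space G₂] :
    IsClosed ((⊤ : Subgroup G₁).prod (⊥ : Subgroup G₂) : Set (G₁ × G₂)) := by
  rw [Subgroup.coe_prod, Subgroup.coe_top, Subgroup.coe_bot]
  exact isClosed_univ.prod isClosed_singleton

lemma goursat_closed_B [T2Space G₁] :
    IsClosed ((⊥ : Subgroup G₁).prod (⊤ : Subgroup G₂) : Set (G₁ × G₂)) := by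
  rw [Subgroup.coe_prod, Subgroup.coe_top, Subgroup.coe_bot]
  exact isClosed_singleton.prod isClosed_univ

lemma goursat_continuous_psiA : Continuous (goursatPsiA H) := by
  have h1 : Continuous (fun h : ↥H => (((h : G₁ × G₂).1, (1 : G₂)) : G₁ × G₂)) :=
    (continuous_subtype_val.fst).prodMk continuous_const
  exact (QuotientGroup.isQuotientMap_mk _).continuous.comp (h1.subtype_mk _)

lemma goursat_continuous_psiB : Continuous (goursatPsiB H) := by
  have h1 : Continuous (fun h : ↥H => (((1 : G₁), (h : G₁ × G₂).2) : G₁ × G₂)) :=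
    continuous_const.prodMk (continuous_subtype_val.snd)
  exact (QuotientGroup.isQuotientMap_mk _).continuous.comp (h1.subtype_mk _)

lemma goursat_continuous_equivA : Continuous (goursatEquivA H) := by
  rw [(QuotientGroup.isQuotientMap_mk _).continuous_iff]
  have : (⇑(goursatEquivA H)) ∘ QuotientGroup.mk = ⇑(goursatPsiA H) :=
    funext fun h => goursatEquivA_mk H h
  rw [this]
  exact goursat_continuous_psiA H

lemma goursat_continuous_equivB : Continuous (goursatEquivB H) := by
  rw [(QuotientGroup.isQuotientMap_mk _).continuous_iff]
  have : (⇑(goursatEquivB H)) ∘ QuotientGroup.mk = ⇑(goursatPsiB H) :=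
    funext fun h => goursatEquivB_mk H h
  rw [this]
  exact goursat_continuous_psiB H

end GoursatTop

set_option synthInstance.maxHeartbeats 1000000 in
set_option maxHeartbeats 1000000 in
/-- Goursat's lemma for profinite groups. Let `G = G₁ × G₂` be a profinite group, `H` a
closed subgroup. Identifying `G₁` and `G₂` with the factors `G₁ × 1` and `1 × G₂`
(`A` and `B` below), we have `π(H) = HG₂ ∩ G₁`, `H ∩ G₁` is a closed normal subgroup of
`HG₂ ∩ G₁`, `(H ∩ G₁) × (H ∩ G₂)` is a closed normal subgroup of `H`, and
`(HG₂ ∩ G₁)/(H ∩ G₁) ≅ (HG₁ ∩ G₂)/(H ∩ G₂) ≅ H/((H ∩ G₁) × (H ∩ G₂))` as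
topological groups. -/
theorem goursat_profinite {G₁ G₂ : Type*} [Group G₁] [Group G₂]
    [TopologicalSpace G₁] [TopologicalSpace G₂] [IsTopologicalGroup G₁] [IsTopologicalGroup G₂]
    [CompactSpace G₁] [CompactSpace G₂] [T2Space G₁] [T2Space G₂]
    [TotallyDisconnectedSpace G₁] [TotallyDisconnectedSpace G₂]
    (H : Subgroup (G₁ × G₂)) (hH : IsClosed (H : Set (G₁ × G₂))) :
    let A : Subgroup (G₁ × G₂) := (⊤ : Subgroup G₁).prod ⊥
    let B : Subgroup (G₁ × G₂) := (⊥ : Subgroup G₁).prod ⊤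
    (Subgroup.map (MonoidHom.inl G₁ G₂) (Subgroup.map (MonoidHom.fst G₁ G₂) H)
        = (H ⊔ B) ⊓ A) ∧
    (Subgroup.map (MonoidHom.inr G₁ G₂) (Subgroup.map (MonoidHom.snd G₁ G₂) H)
        = (H ⊔ A) ⊓ B) ∧
    IsClosed ((H ⊓ A : Subgroup (G₁ × G₂)) : Set (G₁ × G₂)) ∧
    ((H ⊓ A).subgroupOf ((H ⊔ B) ⊓ A)).Normal ∧
    ((H ⊓ B).subgroupOf ((H ⊔ A) ⊓ B)).Normal ∧
    IsClosed (((H ⊓ A) ⊔ (H ⊓ B) : Subgroup (G₁ × G₂)) : Set (G₁ × G₂)) ∧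
    (((H ⊓ A) ⊔ (H ⊓ B)).subgroupOf H).Normal ∧
    (∀ (i1 : ((H ⊓ A).subgroupOf ((H ⊔ B) ⊓ A)).Normal)
       (i2 : ((H ⊓ B).subgroupOf ((H ⊔ A) ⊓ B)).Normal)
       (i3 : (((H ⊓ A) ⊔ (H ⊓ B)).subgroupOf H).Normal),
      ∃ (e : (↥((H ⊔ B) ⊓ A) ⧸ (H ⊓ A).subgroupOf ((H ⊔ B) ⊓ A)) ≃ₜ
             (↥((H ⊔ A) ⊓ B) ⧸ (H ⊓ B).subgroupOf ((H ⊔ A) ⊓ B)))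
        (f : (↥((H ⊔ A) ⊓ B) ⧸ (H ⊓ B).subgroupOf ((H ⊔ A) ⊓ B)) ≃ₜ
             (↥H ⧸ ((H ⊓ A) ⊔ (H ⊓ B)).subgroupOf H)),
        (∀ a b, e (a * b) = e a * e b) ∧ (∀ a b, f (a * b) = f a * f b)) := by
  intro A B
  have hA : IsClosed ((⊤ : Subgroup G₁).prod (⊥ : Subgroup G₂) : Set (G₁ × G₂)) :=
    goursat_closed_A
  have hB : IsClosed ((⊥ : Subgroup G₁).prod (⊤ : Subgroup G₂) : Set (G₁ × G₂)) :=
    goursat_closed_B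
  refine ⟨goursat_eq_A H, goursat_eq_B H, ?_, goursat_normal_A H, goursat_normal_B H,
    ?_, goursat_normal_N H, ?_⟩
  · show IsClosed ((H ⊓ (⊤ : Subgroup G₁).prod ⊥ : Subgroup (G₁ × G₂)) : Set (G₁ × G₂))
    rw [Subgroup.coe_inf]
    exact hH.inter hA
  · show IsClosed (((H ⊓ (⊤ : Subgroup G₁).prod ⊥) ⊔ (H ⊓ (⊥ : Subgroup G₁).prod ⊤) :
      Subgroup (G₁ × G₂)) : Set (G₁ × G₂))
    have cK1 : IsClosed ((H.comap (MonoidHom.inl G₁ G₂) : Subgroup G₁) : Set G₁) := by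
      rw [Subgroup.coe_comap]
      exact hH.preimage (continuous_id.prodMk continuous_const)
    have cK2 : IsClosed ((H.comap (MonoidHom.inr G₁ G₂) : Subgroup G₂) : Set G₂) := by
      rw [Subgroup.coe_comap]
      exact hH.preimage (continuous_const.prodMk continuous_id)
    rw [goursat_N_eq, Subgroup.coe_prod]
    exact cK1.prod cK2
  · intro i1 i2 i3
    haveI : CompactSpace ↥H := isCompact_iff_compactSpace.mp hH.isCompact
    haveI : IsClosed (((H ⊓ (⊤ : Subgroup G₁).prod ⊥).subgroupOf
        ((H ⊔ (⊥ : Subgroup G₁).prod ⊤) ⊓ (⊤ : Subgroup G₁).prod ⊥) : Subgroup _) :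
        Set ↥((H ⊔ (⊥ : Subgroup G₁).prod ⊤) ⊓ (⊤ : Subgroup G₁).prod ⊥)) := by
      rw [Subgroup.subgroupOf, Subgroup.coe_comap]
      exact ((hH.inter hA).preimage continuous_subtype_val)
    haveI : IsClosed (((H ⊓ (⊥ : Subgroup G₁).prod ⊤).subgroupOf
        ((H ⊔ (⊤ : Subgroup G₁).prod ⊥) ⊓ (⊥ : Subgroup G₁).prod ⊤) : Subgroup _) :
        Set ↥((H ⊔ (⊤ : Subgroup G₁).prod ⊥) ⊓ (⊥ : Subgroup G₁).prod ⊤)) := by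
      rw [Subgroup.subgroupOf, Subgroup.coe_comap]
      exact ((hH.inter hB).preimage continuous_subtype_val)
    let eA := Continuous.homeoOfEquivCompactToT2
      (f := (goursatEquivA H).toEquiv) (goursat_continuous_equivA H)
    let eB := Continuous.homeoOfEquivCompactToT2
      (f := (goursatEquivB H).toEquiv) (goursat_continuous_equivB H)
    refine ⟨eA.symm.trans eB, eB.symm, ?_, ?_⟩
    · intro a b
      show (goursatEquivB H) ((goursatEquivA H).symm (a * b))
          = (goursatEquivB H) ((goursatEquivA H).symm a)
            * (goursatEquivB H) ((goursatEquivA H).symm b)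
      rw [map_mul, map_mul]
    · intro a b
      show (goursatEquivB H).symm (a * b)
          = (goursatEquivB H).symm a * (goursatEquivB H).symm b
      rw [map_mul]
end

section
/- Let G be a profinite group, H a closed subgroup, and (N_λ) a family of open normal subgroups of G forming a neighbourhood base at the identity. Then the sets B(H, N_λ) = {K closed subgroup : K·N_λ = H·N_λ} form a base of open neighbourhoods of H in the space S(G) of closed subgroups with the Vietoris topology. -/
open Pointwise

/-- The Vietoris topology on the subsets of `X`, generated by the sets
`{F | F ⊆ U}` and `{F | F ∩ U ≠ ∅}` for `U` open. Restricted to (nonempty) compact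
subsets this is the usual Vietoris hyperspace topology. -/
def vietorisTop (X : Type*) [TopologicalSpace X] : TopologicalSpace (Set X) :=
  TopologicalSpace.generateFrom
    ({t | ∃ U : Set X, IsOpen U ∧ t = {F : Set X | F ⊆ U}} ∪
     {t | ∃ U : Set X, IsOpen U ∧ t = {F : Set X | (F ∩ U).Nonempty}})

/-- `SG G` is the space of closed subgroups of `G`, topologized as a subspace of the
hyperspace of `G` with the Vietoris topology. -/
def SG (G : Type*) [Group G] [TopologicalSpace G] : Type _ :=
  {K : Subgroup G // IsClosed (K : Set G)}

instance SG.topologicalSpace (G : Type*) [Group G] [TopologicalSpace G] :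
    TopologicalSpace (SG G) :=
  TopologicalSpace.induced (fun K => (K.1 : Set G)) (vietorisTop G)

section Aux

variable {G : Type*} [Group G] [TopologicalSpace G]

/-- Product of coe of nested subgroups. -/
lemma aux_coe_mul_coe {N N' : Subgroup G} (h : (N : Set G) ⊆ N') :
    (N : Set G) * (N' : Set G) = (N' : Set G) := by
  apply Set.Subset.antisymm
  · rintro x ⟨a, ha, b, hb, rfl⟩
    exact mul_mem (h ha) hb
  · intro x hx
    exact ⟨1, N.one_mem, x, hx, one_mul x⟩

lemma aux_mono {K H : Set G} {N N' : Subgroup G} (h : (N : Set G) ⊆ N')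
    (hK : K * (N : Set G) = H * (N : Set G)) :
    K * (N' : Set G) = H * (N' : Set G) := by
  calc K * (N' : Set G) = K * ((N : Set G) * N') := by rw [aux_coe_mul_coe h]
    _ = (K * (N : Set G)) * N' := by rw [mul_assoc]
    _ = (H * (N : Set G)) * N' := by rw [hK]
    _ = H * ((N : Set G) * N') := by rw [mul_assoc]
    _ = H * (N' : Set G) := by rw [aux_coe_mul_coe h]

lemma aux_isOpen_sub {U : Set G} (hU : IsOpen U) :
    IsOpen {K : SG G | (K.1 : Set G) ⊆ U} := by
  refine isOpen_induced_iff (t := vietorisTop G).mpr ⟨{F : Set G | F ⊆ U}, ?_, rfl⟩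
  exact TopologicalSpace.GenerateOpen.basic _ (Or.inl ⟨U, hU, rfl⟩)

lemma aux_isOpen_meet {U : Set G} (hU : IsOpen U) :
    IsOpen {K : SG G | ((K.1 : Set G) ∩ U).Nonempty} := by
  refine isOpen_induced_iff (t := vietorisTop G).mpr ⟨{F : Set G | (F ∩ U).Nonempty}, ?_, rfl⟩
  exact TopologicalSpace.GenerateOpen.basic _ (Or.inr ⟨U, hU, rfl⟩)

variable [IsTopologicalGroup G] [CompactSpace G] [T2Space G]

/-- Openness of B(H, N). -/
lemma aux_isOpen_B (H : SG G) (N : Subgroup G) (hN : IsOpen (N : Set G)) :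
    IsOpen {K : SG G | (K.1 : Set G) * (N : Set G) = (H.1 : Set G) * (N : Set G)} := by
  -- finite cover of H by cosets of N
  have hHc : IsCompact (H.1 : Set G) := H.2.isCompact
  have hcov : (H.1 : Set G) ⊆ ⋃ h : (H.1 : Set G), (h : G) • (N : Set G) := by
    intro x hx
    exact Set.mem_iUnion.2 ⟨⟨x, hx⟩, ⟨1, N.one_mem, mul_one x⟩⟩
  obtain ⟨T, hT⟩ := hHc.elim_finite_subcover
    (fun h : (H.1 : Set G) => (h : G) • (N : Set G)) (fun h => hN.smul _) hcov
  have key : {K : SG G | (K.1 : Set G) * (N : Set G) = (H.1 : Set G) * (N : Set G)}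
      = {K : SG G | (K.1 : Set G) ⊆ (H.1 : Set G) * (N : Set G)} ∩
        ⋂ h ∈ T, {K : SG G | ((K.1 : Set G) ∩ ((h : G) • (N : Set G))).Nonempty} := by
    ext K
    simp only [Set.mem_inter_iff, Set.mem_iInter, Set.mem_setOf_eq]
    constructor
    · intro hK
      refine ⟨hK ▸ Set.subset_mul_left _ N.one_mem, fun h _ => ?_⟩
      have : (h : G) ∈ (K.1 : Set G) * (N : Set G) := by
        rw [hK]; exact Set.subset_mul_left _ N.one_mem h.2
      obtain ⟨k, hk, n, hn, hkn⟩ := this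
      refine ⟨k, hk, n⁻¹, inv_mem hn, ?_⟩
      show (h : G) • n⁻¹ = k
      rw [smul_eq_mul, ← hkn]
      group
    · rintro ⟨hsub, hmeet⟩
      apply Set.Subset.antisymm
      · calc (K.1 : Set G) * (N : Set G)
            ⊆ ((H.1 : Set G) * (N : Set G)) * (N : Set G) :=
              Set.mul_subset_mul_right hsub
          _ = (H.1 : Set G) * ((N : Set G) * (N : Set G)) := mul_assoc _ _ _
          _ = (H.1 : Set G) * (N : Set G) := by
              rw [aux_coe_mul_coe (le_refl (N : Set G))]
      · have hHsub : (H.1 : Set G) ⊆ (K.1 : Set G) * (N : Set G) := by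
          intro x hx
          obtain ⟨h, hhT, hxh⟩ := Set.mem_iUnion₂.1 (hT hx)
          obtain ⟨k, hk, m, hm, hkm⟩ := hmeet h hhT
          obtain ⟨n, hn, hxn⟩ := hxh
          replace hkm : (h : G) * m = k := hkm
          replace hxn : (h : G) * n = x := hxn
          refine ⟨k, hk, m⁻¹ * n, mul_mem (inv_mem hm) hn, ?_⟩
          show k * (m⁻¹ * n) = x
          rw [← hkm, ← hxn]
          group
        calc (H.1 : Set G) * (N : Set G)
            ⊆ ((K.1 : Set G) * (N : Set G)) * (N : Set G) :=
              Set.mul_subset_mul_right hHsub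
          _ = (K.1 : Set G) * (N : Set G) := by
              rw [mul_assoc, aux_coe_mul_coe (le_refl (N : Set G))]
  rw [key]
  exact (aux_isOpen_sub (hN.mul_left)).inter
    (isOpen_biInter_finset fun h _ => aux_isOpen_meet (hN.smul _))

end Aux

/-- Let `G` be a profinite group, `H` a closed subgroup, and `(N i)` a family of open
normal subgroups forming a neighbourhood base at the identity. Then the sets
`B(H, N i) = {K closed subgroup | K·(N i) = H·(N i)}` form a base of open
neighbourhoods of `H` in the space `S(G)` of closed subgroups. -/
theorem subgroup_space_basis {G : Type*} [Group G] [TopologicalSpace G] [IsTopologicalGroup G]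
    [CompactSpace G] [T2Space G] [TotallyDisconnectedSpace G]
    {ι : Type*} (H : SG G) (N : ι → Subgroup G)
    (hOpen : ∀ i, IsOpen ((N i : Subgroup G) : Set G))
    (hNormal : ∀ i, (N i).Normal)
    (hBase : (nhds (1 : G)).HasBasis (fun _ : ι => True)
      (fun i => ((N i : Subgroup G) : Set G))) :
    (∀ i, IsOpen {K : SG G |
        (K.1 : Set G) * ((N i : Subgroup G) : Set G)
          = (H.1 : Set G) * ((N i : Subgroup G) : Set G)}) ∧
    (nhds H).HasBasis (fun _ : ι => True)
      (fun i => {K : SG G |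
        (K.1 : Set G) * ((N i : Subgroup G) : Set G)
          = (H.1 : Set G) * ((N i : Subgroup G) : Set G)}) := by
  have hopenB : ∀ i, IsOpen {K : SG G |
      (K.1 : Set G) * ((N i : Subgroup G) : Set G)
        = (H.1 : Set G) * ((N i : Subgroup G) : Set G)} :=
    fun i => aux_isOpen_B H (N i) (hOpen i)
  refine ⟨hopenB, ?_⟩
  -- nonempty index
  obtain ⟨i₀, -, -⟩ := hBase.mem_iff.1 (Filter.univ_mem)
  -- directedness
  have hdir : ∀ i j, ∃ k, ((N k : Subgroup G) : Set G) ⊆ N i ∧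
      ((N k : Subgroup G) : Set G) ⊆ N j := by
    intro i j
    have : ((N i : Subgroup G) : Set G) ∩ (N j : Subgroup G) ∈ nhds (1 : G) :=
      Filter.inter_mem ((hOpen i).mem_nhds (N i).one_mem)
        ((hOpen j).mem_nhds (N j).one_mem)
    obtain ⟨k, -, hk⟩ := hBase.mem_iff.1 this
    exact ⟨k, fun x hx => (hk hx).1, fun x hx => (hk hx).2⟩
  -- key: every generate-open set containing H.1 contains a basic set
  have key : ∀ O : Set (Set G),
      TopologicalSpace.GenerateOpen
        ({t | ∃ U : Set G, IsOpen U ∧ t = {F : Set G | F ⊆ U}} ∪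
         {t | ∃ U : Set G, IsOpen U ∧ t = {F : Set G | (F ∩ U).Nonempty}}) O →
      (H.1 : Set G) ∈ O → ∃ i, ∀ K : SG G,
        (K.1 : Set G) * ((N i : Subgroup G) : Set G)
          = (H.1 : Set G) * ((N i : Subgroup G) : Set G) → (K.1 : Set G) ∈ O := by
    intro O hO
    induction hO with
    | basic s hs =>
      intro hH
      rcases hs with ⟨U, hU, rfl⟩ | ⟨U, hU, rfl⟩
      · -- H.1 ⊆ U
        obtain ⟨V, hV1, hV2⟩ :=
          compact_open_separated_mul_right H.2.isCompact hU hH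
        obtain ⟨i, -, hi⟩ := hBase.mem_iff.1 hV1
        refine ⟨i, fun K hK => ?_⟩
        calc (K.1 : Set G) ⊆ (K.1 : Set G) * ((N i : Subgroup G) : Set G) :=
              Set.subset_mul_left _ (N i).one_mem
          _ = (H.1 : Set G) * ((N i : Subgroup G) : Set G) := hK
          _ ⊆ (H.1 : Set G) * V := Set.mul_subset_mul_left hi
          _ ⊆ U := hV2
      · -- (H.1 ∩ U).Nonempty
        obtain ⟨h, hhH, hhU⟩ := hH
        have hU1 : (fun n => h * n) ⁻¹' U ∈ nhds (1 : G) := by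
          have : ContinuousAt (fun n => h * n) (1 : G) :=
            (continuous_mul_left h).continuousAt
          apply this.preimage_mem_nhds
          rw [mul_one]
          exact hU.mem_nhds hhU
        obtain ⟨i, -, hi⟩ := hBase.mem_iff.1 hU1
        refine ⟨i, fun K hK => ?_⟩
        have : h ∈ (K.1 : Set G) * ((N i : Subgroup G) : Set G) := by
          rw [hK]; exact Set.subset_mul_left _ (N i).one_mem hhH
        obtain ⟨k, hk, n, hn, hkn⟩ := this
        refine ⟨k, hk, ?_⟩
        have hkval : k = h * n⁻¹ := by rw [← hkn]; group
        rw [hkval]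
        exact hi (inv_mem hn)
    | univ => exact fun _ => ⟨i₀, fun K _ => trivial⟩
    | inter s t _ _ ihs iht =>
      rintro ⟨hHs, hHt⟩
      obtain ⟨i, hi⟩ := ihs hHs
      obtain ⟨j, hj⟩ := iht hHt
      obtain ⟨k, hk1, hk2⟩ := hdir i j
      exact ⟨k, fun K hK => ⟨hi K (aux_mono hk1 hK), hj K (aux_mono hk2 hK)⟩⟩
    | sUnion S _ ih =>
      rintro ⟨s, hsS, hHs⟩
      obtain ⟨i, hi⟩ := ih s hsS hHs
      exact ⟨i, fun K hK => ⟨s, hsS, hi K hK⟩⟩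
  constructor
  intro T
  constructor
  · intro hT
    obtain ⟨O, hOT, hOopen, hHO⟩ := mem_nhds_iff.1 hT
    obtain ⟨O', hO'open, rfl⟩ := (isOpen_induced_iff (t := vietorisTop G)).1 hOopen
    obtain ⟨i, hi⟩ := key O' hO'open hHO
    exact ⟨i, trivial, fun K hK => hOT (hi K hK)⟩
  · rintro ⟨i, -, hsub⟩
    exact Filter.mem_of_superset ((hopenB i).mem_nhds rfl) hsub
end

section
/- Let G be a profinite group whose subgroup space S(G) has an isolated point, and let H be a closed subgroup of G that is solitary (i.e., H is an isolated point of the derived set S(G)′). If K is a closed normal subgroup of G contained in H, then H/K is solitary in G/K. -/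
open Pointwise

/-- The derived set (set of non-isolated points) of a topological space. -/
def derivedPts (Y : Type*) [TopologicalSpace Y] : Set Y :=
  {y | y ∈ closure ({y}ᶜ : Set Y)}

/-- A closed subgroup `H` of `G` is solitary if it is a non-isolated point of the space
`S(G)` of closed subgroups which is isolated in the derived set `S(G)′`. -/
def Solitary {G : Type*} [Group G] [TopologicalSpace G] (H : SG G) : Prop :=
  H ∈ derivedPts (SG G) ∧
    ∃ U : Set (SG G), IsOpen U ∧ U ∩ derivedPts (SG G) = {H}

section Aux
variable {Γ : Type*} [Group Γ] [TopologicalSpace Γ]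

def sgSub (Γ : Type*) [Group Γ] [TopologicalSpace Γ] : Set (Set (Set Γ)) :=
  ({t | ∃ U : Set Γ, IsOpen U ∧ t = {F : Set Γ | F ⊆ U}} ∪
     {t | ∃ U : Set Γ, IsOpen U ∧ t = {F : Set Γ | (F ∩ U).Nonempty}})

lemma SG.topeq : (SG.topologicalSpace Γ) = TopologicalSpace.generateFrom
    ((Set.preimage (fun M : SG Γ => (M.1 : Set Γ))) '' sgSub Γ) := by
  show TopologicalSpace.induced (fun M : SG Γ => (M.1 : Set Γ))
    (TopologicalSpace.generateFrom (sgSub Γ)) = _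
  exact induced_generateFrom_eq

lemma isOpen_le_set {U : Set Γ} (hU : IsOpen U) : IsOpen {M : SG Γ | (M.1 : Set Γ) ⊆ U} := by
  have h : @IsOpen _ (vietorisTop Γ) {F : Set Γ | F ⊆ U} :=
    TopologicalSpace.GenerateOpen.basic _ (Or.inl ⟨U, hU, rfl⟩)
  exact ⟨_, h, rfl⟩

lemma isOpen_hits {U : Set Γ} (hU : IsOpen U) :
    IsOpen {M : SG Γ | ((M.1 : Set Γ) ∩ U).Nonempty} := by
  have h : @IsOpen _ (vietorisTop Γ) {F : Set Γ | (F ∩ U).Nonempty} :=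
    TopologicalSpace.GenerateOpen.basic _ (Or.inr ⟨U, hU, rfl⟩)
  exact ⟨_, h, rfl⟩

def VN (N : Subgroup Γ) (H : SG Γ) : Set (SG Γ) := {M : SG Γ | M.1 ⊔ N = H.1 ⊔ N}

lemma self_mem_VN (N : Subgroup Γ) (H : SG Γ) : H ∈ VN N H := rfl

lemma VN_mono {N N' : Subgroup Γ} (h : N ≤ N') (H : SG Γ) : VN N H ⊆ VN N' H := by
  intro M hM
  have : M.1 ⊔ N' = (M.1 ⊔ N) ⊔ N' := by rw [sup_assoc, sup_eq_right.2 h]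
  simp only [VN, Set.mem_setOf_eq] at *
  show M.1 ⊔ N' = H.1 ⊔ N'
  rw [this, hM, sup_assoc, sup_eq_right.2 h]
variable [IsTopologicalGroup Γ] [CompactSpace Γ]


lemma normal_inf {A B : Subgroup Γ} (hA : A.Normal) (hB : B.Normal) : (A ⊓ B).Normal := by
  constructor
  intro n hn g
  exact ⟨hA.conj_mem n hn.1 g, hB.conj_mem n hn.2 g⟩

lemma exists_normal_mul_subset
    (hsn : ∀ U : Set Γ, IsOpen U → (1:Γ) ∈ U →
      ∃ N : Subgroup Γ, N.Normal ∧ IsOpen (N : Set Γ) ∧ (N : Set Γ) ⊆ U)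
    {C U : Set Γ} (hC : IsCompact C) (hU : IsOpen U) (hCU : C ⊆ U) :
    ∃ N : Subgroup Γ, N.Normal ∧ IsOpen (N : Set Γ) ∧ C * (N : Set Γ) ⊆ U := by
  -- for each x ∈ C pick N_x with x • N_x ⊆ U
  have hx : ∀ x : C, ∃ N : Subgroup Γ, N.Normal ∧ IsOpen (N : Set Γ) ∧
      ((x:Γ) * ·) ⁻¹' U ⊇ (N : Set Γ) := by
    intro x
    obtain ⟨N, h1, h2, h3⟩ := hsn (((x:Γ) * ·) ⁻¹' U) (hU.preimage (continuous_mul_left _))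
      (by simpa using hCU x.2)
    exact ⟨N, h1, h2, h3⟩
  choose N hNn hNo hNU using hx
  have hcov : C ⊆ ⋃ x : C, (x:Γ) • (N x : Set Γ) := by
    intro y hy
    exact Set.mem_iUnion.2 ⟨⟨y, hy⟩, ⟨1, (N _).one_mem, mul_one y⟩⟩
  obtain ⟨s, hs⟩ := hC.elim_finite_subcover _ (fun x => (hNo x).smul ((x:Γ))) hcov
  -- intersect
  classical
  have key : ∀ s : Finset C, (s.inf N).Normal ∧ IsOpen ((s.inf N : Subgroup Γ) : Set Γ) := by
    intro s
    induction s using Finset.induction_on with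
    | empty => exact ⟨by rw [Finset.inf_empty]; infer_instance,
        by rw [Finset.inf_empty]; simpa using isOpen_univ⟩
    | insert _ _ hni ih =>
      rw [Finset.inf_insert]
      exact ⟨normal_inf (hNn _) ih.1, by rw [Subgroup.coe_inf]; exact (hNo _).inter ih.2⟩
  refine ⟨s.inf N, (key s).1, (key s).2, ?_⟩
  rintro z ⟨c, hc, n, hn, rfl⟩
  obtain ⟨x, hxs, hcx⟩ := Set.mem_iUnion₂.1 (hs hc)
  obtain ⟨n₀, hn₀, rfl⟩ := hcx
  have hnNx : n ∈ N x := (Finset.inf_le hxs : s.inf N ≤ N x) hn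
  have : n₀ * n ∈ N x := (N x).mul_mem hn₀ hnNx
  have := hNU x this
  simpa [mul_assoc] using this
lemma isOpen_VN (N : Subgroup Γ) (hNn : N.Normal) (hNo : IsOpen (N : Set Γ)) (H : SG Γ) :
    IsOpen (VN N H) := by
  haveI := hNn
  set J := H.1 ⊔ N with hJ
  have hJo : IsOpen (J : Set Γ) := Subgroup.isOpen_mono le_sup_right hNo
  have hJcl : IsClosed (J : Set Γ) := J.isClosed_of_isOpen hJo
  have hJc : IsCompact (J : Set Γ) := hJcl.isCompact
  have hcov : (J : Set Γ) ⊆ ⋃ t : (J : Set Γ), (t : Γ) • (N : Set Γ) := by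
    intro x hx
    exact Set.mem_iUnion.2 ⟨⟨x, hx⟩, ⟨1, N.one_mem, mul_one x⟩⟩
  obtain ⟨s, hs⟩ := hJc.elim_finite_subcover (fun t : (J : Set Γ) => (t : Γ) • (N : Set Γ)) (fun t => hNo.smul _) hcov
  have heq : VN N H = {M : SG Γ | (M.1 : Set Γ) ⊆ (J : Set Γ)} ∩
      ⋂ t ∈ s, {M : SG Γ | ((M.1 : Set Γ) ∩ (t : Γ) • (N : Set Γ)).Nonempty} := by
    ext M
    constructor
    · intro hM
      have hM' : M.1 ⊔ N = J := hM
      constructor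
      · intro x hxM
        have : x ∈ (↑(M.1 ⊔ N) : Set Γ) := (le_sup_left : M.1 ≤ M.1 ⊔ N) hxM
        rwa [hM'] at this
      · refine Set.mem_iInter₂.2 (fun t _ => ?_)
        have htJ : (t : Γ) ∈ (↑(M.1 ⊔ N) : Set Γ) := by rw [hM']; exact t.2
        rw [Subgroup.mul_normal M.1 N] at htJ
        obtain ⟨m, hm, n, hn, hmn⟩ := htJ
        refine ⟨m, hm, ⟨n⁻¹, N.inv_mem hn, ?_⟩⟩
        show (t : Γ) * n⁻¹ = m
        rw [← hmn]; group
    · rintro ⟨h1, h2⟩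
      show M.1 ⊔ N = J
      apply le_antisymm
      · exact sup_le (fun x hx => h1 hx) le_sup_right
      · intro x hx
        obtain ⟨t, hts, hxt⟩ := Set.mem_iUnion₂.1 (hs hx)
        obtain ⟨m, hm, n, hn, rfl⟩ : ∃ m ∈ (M.1:Set Γ), ∃ n ∈ (N:Set Γ), m * n = x := by
          obtain ⟨n₁, hn₁, rfl⟩ := hxt
          obtain ⟨m, hm, hmt⟩ := Set.mem_iInter₂.1 h2 t hts
          obtain ⟨n₂, hn₂, rfl⟩ := hmt
          exact ⟨(t:Γ) * n₂, hm, n₂⁻¹ * n₁, N.mul_mem (N.inv_mem hn₂) hn₁,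
            by simp only [smul_eq_mul]; group⟩
        exact Subgroup.mul_mem _ ((le_sup_left : M.1 ≤ M.1 ⊔ N) hm)
          ((le_sup_right : N ≤ M.1 ⊔ N) hn)
  rw [heq]
  exact (isOpen_le_set hJo).inter
    (Set.Finite.isOpen_biInter s.finite_toSet (fun t _ => isOpen_hits (hNo.smul _)))

lemma exists_VN_subset
    (hsn : ∀ U : Set Γ, IsOpen U → (1:Γ) ∈ U →
      ∃ N : Subgroup Γ, N.Normal ∧ IsOpen (N : Set Γ) ∧ (N : Set Γ) ⊆ U)
    {U : Set (SG Γ)} (hU : IsOpen U) {H : SG Γ} (hHU : H ∈ U) :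
    ∃ N : Subgroup Γ, N.Normal ∧ IsOpen (N : Set Γ) ∧ VN N H ⊆ U := by
  have hbasis := TopologicalSpace.isTopologicalBasis_of_subbasis (SG.topeq (Γ := Γ))
  obtain ⟨v, hv, hHv, hvU⟩ := hbasis.exists_subset_of_mem_open hHU hU
  obtain ⟨f, ⟨hffin, hfsub⟩, rfl⟩ := hv
  -- for each subbasic piece get an N
  have piece : ∀ b ∈ f, ∃ N : Subgroup Γ, N.Normal ∧ IsOpen (N : Set Γ) ∧ VN N H ⊆ b := by
    intro b hb
    obtain ⟨t, ht, rfl⟩ := hfsub hb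
    have hHb : (H.1 : Set Γ) ∈ t := hHv _ hb
    rcases ht with ⟨U₀, hU₀, rfl⟩ | ⟨U₀, hU₀, rfl⟩
    · -- t = {F | F ⊆ U₀}
      obtain ⟨N, hNn, hNo, hNsub⟩ := exists_normal_mul_subset hsn H.2.isCompact hU₀ hHb
      haveI := hNn
      refine ⟨N, hNn, hNo, fun M hM => ?_⟩
      show (M.1 : Set Γ) ⊆ U₀
      intro x hxM
      have hx : x ∈ (↑(M.1 ⊔ N) : Set Γ) := (le_sup_left : M.1 ≤ M.1 ⊔ N) hxM
      rw [show M.1 ⊔ N = H.1 ⊔ N from hM, Subgroup.mul_normal H.1 N] at hx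
      exact hNsub hx
    · -- t = {F | (F ∩ U₀).Nonempty}
      obtain ⟨h, hhH, hhU₀⟩ := hHb
      obtain ⟨N, hNn, hNo, hNsub⟩ := exists_normal_mul_subset hsn isCompact_singleton hU₀
        (Set.singleton_subset_iff.2 hhU₀)
      haveI := hNn
      refine ⟨N, hNn, hNo, fun M hM => ?_⟩
      show ((M.1 : Set Γ) ∩ U₀).Nonempty
      have hh : h ∈ (↑(M.1 ⊔ N) : Set Γ) := by
        rw [show M.1 ⊔ N = H.1 ⊔ N from hM]
        exact (le_sup_left : H.1 ≤ H.1 ⊔ N) hhH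
      rw [Subgroup.mul_normal M.1 N] at hh
      obtain ⟨m, hm, n, hn, hmn⟩ := hh
      refine ⟨m, hm, ?_⟩
      have : h * n⁻¹ ∈ U₀ := hNsub ⟨h, rfl, n⁻¹, N.inv_mem hn, rfl⟩
      have hmeq : m = h * n⁻¹ := by rw [← hmn]; group
      rwa [hmeq]
  -- combine over the finite family
  have comb : ∃ N : Subgroup Γ, N.Normal ∧ IsOpen (N : Set Γ) ∧ VN N H ⊆ ⋂₀ f := by
    refine Set.Finite.induction_on_subset
      (motive := fun f' _ => ∃ N : Subgroup Γ, N.Normal ∧ IsOpen (N : Set Γ) ∧ VN N H ⊆ ⋂₀ f')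
      f hffin ⟨⊤, inferInstance, by simpa using isOpen_univ, by simp⟩ ?_
    rintro a s haf _ _ ⟨N₂, hN₂n, hN₂o, hN₂⟩
    obtain ⟨N₁, hN₁n, hN₁o, hN₁⟩ := piece a haf
    refine ⟨N₁ ⊓ N₂, normal_inf hN₁n hN₂n, by rw [Subgroup.coe_inf]; exact hN₁o.inter hN₂o, ?_⟩
    rw [Set.sInter_insert]
    exact Set.subset_inter ((VN_mono inf_le_left H).trans hN₁)
      ((VN_mono inf_le_right H).trans hN₂)
  obtain ⟨N, h1, h2, h3⟩ := comb
  exact ⟨N, h1, h2, h3.trans hvU⟩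

lemma derived_mem_VN {H : SG Γ} (hH : H ∈ derivedPts (SG Γ)) (N : Subgroup Γ)
    (hNn : N.Normal) (hNo : IsOpen (N : Set Γ)) : ∃ M ∈ VN N H, M ≠ H := by
  have hcl : H ∈ closure ({H}ᶜ : Set (SG Γ)) := hH
  obtain ⟨M, hM1, hM2⟩ := mem_closure_iff.1 hcl (VN N H) (isOpen_VN N hNn hNo H)
    (self_mem_VN N H)
  exact ⟨M, hM1, hM2⟩

lemma isolated_exists
    (hsn : ∀ U : Set Γ, IsOpen U → (1:Γ) ∈ U →
      ∃ N : Subgroup Γ, N.Normal ∧ IsOpen (N : Set Γ) ∧ (N : Set Γ) ⊆ U)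
    {M : SG Γ} (hM : M ∉ derivedPts (SG Γ)) :
    ∃ N : Subgroup Γ, N.Normal ∧ IsOpen (N : Set Γ) ∧ VN N M ⊆ {M} := by
  have : ¬ (M ∈ closure ({M}ᶜ : Set (SG Γ))) := hM
  rw [mem_closure_iff] at this
  push_neg at this
  obtain ⟨O, hOo, hMO, hO⟩ := this
  obtain ⟨N, h1, h2, h3⟩ := exists_VN_subset hsn hOo hMO
  refine ⟨N, h1, h2, fun L hL => ?_⟩
  by_contra hne
  exact Set.eq_empty_iff_forall_notMem.1 hO L ⟨h3 hL, hne⟩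

lemma isolated_le {M : SG Γ} {N : Subgroup Γ} (hNo : IsOpen (N : Set Γ))
    (hiso : VN N M ⊆ {M}) : N ≤ M.1 := by
  have key : ∀ k ∈ M.1 ⊔ N, k ∈ M.1 := by
    intro k hk
    set Y := (M.1 ⊔ Subgroup.zpowers k).topologicalClosure with hY
    have hMNcl : IsClosed ((M.1 ⊔ N : Subgroup Γ) : Set Γ) :=
      (M.1 ⊔ N).isClosed_of_isOpen (Subgroup.isOpen_mono le_sup_right hNo)
    have hYle : Y ≤ M.1 ⊔ N :=
      Subgroup.topologicalClosure_minimal _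
        (sup_le le_sup_left (Subgroup.zpowers_le.mpr hk)) hMNcl
    have hMY : M.1 ≤ Y := le_sup_left.trans (Subgroup.le_topologicalClosure _)
    have hYVN : (⟨Y, Subgroup.isClosed_topologicalClosure _⟩ : SG Γ) ∈ VN N M := by
      show Y ⊔ N = M.1 ⊔ N
      exact le_antisymm (sup_le hYle le_sup_right) (sup_le (hMY.trans le_sup_left) le_sup_right)
    have hYM := hiso hYVN
    have hYM' : Y = M.1 := congrArg Subtype.val hYM
    have hzY : Subgroup.zpowers k ≤ Y :=
      le_trans le_sup_right (Subgroup.le_topologicalClosure _)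
    have hkY : k ∈ Y := hzY (Subgroup.mem_zpowers k)
    rwa [hYM'] at hkY
  intro n hn
  exact key n ((le_sup_right : N ≤ M.1 ⊔ N) hn)

end Aux
/-- Let `G` be a profinite group whose subgroup space `S(G)` has an isolated point, and
let `H` be a solitary closed subgroup of `G`. If `K` is a closed normal subgroup of `G`
contained in `H`, then the image `H/K` is solitary in `G/K`. -/

theorem solitary_quotient {G : Type*} [Group G] [TopologicalSpace G] [IsTopologicalGroup G]
    [CompactSpace G] [T2Space G] [TotallyDisconnectedSpace G]
    (hiso : ∃ L : SG G, IsOpen ({L} : Set (SG G)))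
    (H : SG G) (hH : Solitary H)
    (K : Subgroup G) (hKc : IsClosed (K : Set G)) (hKn : K.Normal) (hKH : K ≤ H.1) :
    ∃ hc : IsClosed ((Subgroup.map (QuotientGroup.mk' K) H.1 : Subgroup (G ⧸ K)) :
        Set (G ⧸ K)),
      Solitary (⟨Subgroup.map (QuotientGroup.mk' K) H.1, hc⟩ : SG (G ⧸ K)) := by
  classical
  set π := QuotientGroup.mk' K with hπdef
  have hπsurj : Function.Surjective π := QuotientGroup.mk'_surjective K
  have hπcont : Continuous π := QuotientGroup.continuous_mk
  -- small normal subgroups in G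
  have hsnG : ∀ U : Set G, IsOpen U → (1:G) ∈ U →
      ∃ N : Subgroup G, N.Normal ∧ IsOpen (N : Set G) ∧ (N : Set G) ⊆ U := by
    intro U hU h1U
    obtain ⟨V, hV, h1V, hVU⟩ := compact_exists_isClopen_in_isOpen hU h1U
    obtain ⟨N, hN⟩ := IsTopologicalGroup.exist_openNormalSubgroup_sub_clopen_nhds_of_one hV h1V
    exact ⟨N.toSubgroup, N.isNormal', N.toOpenSubgroup.isOpen, hN.trans hVU⟩
  -- small normal subgroups in G ⧸ K
  have hsnQ : ∀ U : Set (G ⧸ K), IsOpen U → (1:G ⧸ K) ∈ U →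
      ∃ N : Subgroup (G ⧸ K), N.Normal ∧ IsOpen (N : Set (G ⧸ K)) ∧ (N : Set (G ⧸ K)) ⊆ U := by
    intro U hU h1U
    have hpre : IsOpen (π ⁻¹' U) := hU.preimage hπcont
    have hKpre : (K : Set G) ⊆ π ⁻¹' U := by
      intro k hk
      have : π k = 1 := (QuotientGroup.eq_one_iff k).2 hk
      simpa [Set.mem_preimage, this] using h1U
    obtain ⟨N, hNn, hNo, hNU⟩ := exists_normal_mul_subset hsnG hKc.isCompact hpre hKpre
    refine ⟨Subgroup.map π N, hNn.map π hπsurj, ?_, ?_⟩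
    · have : ((Subgroup.map π N : Subgroup (G ⧸ K)) : Set (G ⧸ K)) = π '' (N : Set G) := by
        simp [Subgroup.coe_map]
      rw [this]
      exact QuotientGroup.isOpenMap_coe _ hNo
    · rintro x hx
      obtain ⟨n, hn, rfl⟩ := hx
      have : (1:G) * n ∈ (K : Set G) * (N : Set G) :=
        Set.mul_mem_mul K.one_mem hn
      rw [one_mul] at this
      exact hNU this
  -- closedness of images of closed subgroups
  have hmapcl : ∀ M : Subgroup G, IsClosed (M : Set G) →
      IsClosed ((Subgroup.map π M : Subgroup (G ⧸ K)) : Set (G ⧸ K)) := by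
    intro M hM
    have : ((Subgroup.map π M : Subgroup (G ⧸ K)) : Set (G ⧸ K)) = ((↑) : G → G ⧸ K) '' (M : Set G) := by
      simp [Subgroup.coe_map]
      rfl
    rw [this]
    exact QuotientGroup.isClosedMap_coe hKc.isCompact _ hM
  have hc : IsClosed ((Subgroup.map π H.1 : Subgroup (G ⧸ K)) : Set (G ⧸ K)) := hmapcl H.1 H.2
  refine ⟨hc, ?_⟩
  set Hbar : SG (G ⧸ K) := ⟨Subgroup.map π H.1, hc⟩ with hHbar
  -- algebraic transfer lemmas
  have hcomap_map : ∀ A : Subgroup G, K ≤ A → Subgroup.comap π (Subgroup.map π A) = A := by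
    intro A hA
    rw [Subgroup.comap_map_eq, QuotientGroup.ker_mk', sup_eq_left.2 hA]
  have hmap_inj : ∀ A B : Subgroup G, K ≤ A → K ≤ B →
      Subgroup.map π A = Subgroup.map π B → A = B := by
    intro A B hA hB hab
    rw [← hcomap_map A hA, ← hcomap_map B hB, hab]
  have hKcomap : ∀ A : Subgroup (G ⧸ K), K ≤ Subgroup.comap π A := by
    intro A k hk
    have h1 : π k = 1 := (QuotientGroup.eq_one_iff k).2 hk
    have : π k ∈ A := by rw [h1]; exact A.one_mem
    exact this
  have hcomapcl : ∀ L : SG (G ⧸ K), IsClosed ((Subgroup.comap π L.1 : Subgroup G) : Set G) := by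
    intro L
    exact L.2.preimage hπcont
  -- solitary data for H
  obtain ⟨hHd, Us, hUso, hUsD⟩ := hH
  have hHUs : H ∈ Us := by
    have h1 : H ∈ ({H} : Set (SG G)) := rfl
    rw [← hUsD] at h1
    exact h1.1
  obtain ⟨NU, hNUn, hNUo, hNUsub⟩ := exists_VN_subset hsnG hUso hHUs
  ------------------------------------------------------------------
  -- PART 1 : Hbar is a non-isolated point of SG (G ⧸ K)
  ------------------------------------------------------------------
  have part1 : Hbar ∈ derivedPts (SG (G ⧸ K)) := by
    show Hbar ∈ closure ({Hbar}ᶜ : Set (SG (G ⧸ K)))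
    rw [mem_closure_iff]
    intro Ubar hUbaro hHbarU
    by_contra hemp
    rw [Set.not_nonempty_iff_eq_empty] at hemp
    have hUsing : ∀ L : SG (G ⧸ K), L ∈ Ubar → L = Hbar := by
      intro L hL
      by_contra hne
      exact Set.eq_empty_iff_forall_notMem.1 hemp L ⟨hL, hne⟩
    obtain ⟨Nbar, hNbarn, hNbaro, hNbarsub⟩ := exists_VN_subset hsnQ hUbaro hHbarU
    set N := Subgroup.comap π Nbar with hNdef
    have hNn : N.Normal := hNbarn.comap π
    have hNo : IsOpen (N : Set G) := hNbaro.preimage hπcont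
    have hKN : K ≤ N := hKcomap Nbar
    have hmapN : Subgroup.map π N = Nbar := Subgroup.map_comap_eq_self_of_surjective hπsurj _
    -- (⋆)
    have star : ∀ M : SG G, K ≤ M.1 → M.1 ⊔ N = H.1 ⊔ N → M = H := by
      intro M hKM hMN
      have hLcl := hmapcl M.1 M.2
      have hLVN : (⟨Subgroup.map π M.1, hLcl⟩ : SG (G ⧸ K)) ∈ VN Nbar Hbar := by
        show Subgroup.map π M.1 ⊔ Nbar = Subgroup.map π H.1 ⊔ Nbar
        rw [← hmapN, ← Subgroup.map_sup, ← Subgroup.map_sup, hMN]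
      have := hUsing _ (hNbarsub hLVN)
      have hmm : Subgroup.map π M.1 = Subgroup.map π H.1 := congrArg Subtype.val this
      exact Subtype.ext (hmap_inj _ _ hKM hKH hmm)
    -- pre-stage: H is open
    have hHopen : IsOpen (H.1 : Set G) := by
      obtain ⟨Mv, hMvVN, hMvne⟩ := derived_mem_VN hHd (NU ⊓ N)
        (normal_inf hNUn hNn) (by rw [Subgroup.coe_inf]; exact hNUo.inter hNo)
      have hMvUs : Mv ∈ Us := hNUsub (VN_mono inf_le_left H hMvVN)
      have hMvnotD : Mv ∉ derivedPts (SG G) := by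
        intro hD
        have : Mv ∈ Us ∩ derivedPts (SG G) := ⟨hMvUs, hD⟩
        rw [hUsD] at this
        exact hMvne this
      obtain ⟨N₁, hN₁n, hN₁o, hN₁iso⟩ := isolated_exists hsnG hMvnotD
      have hN₁Mv : N₁ ≤ Mv.1 := isolated_le hN₁o hN₁iso
      have hMvopen : IsOpen (Mv.1 : Set G) := Subgroup.isOpen_mono hN₁Mv hN₁o
      -- Mv ⊔ K = H
      have hcl : IsClosed ((Mv.1 ⊔ K : Subgroup G) : Set G) := by
        rw [Subgroup.mul_normal Mv.1 K]
        exact (Mv.2.isCompact.mul hKc.isCompact).isClosed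
      have hsupN : (Mv.1 ⊔ K) ⊔ N = H.1 ⊔ N := by
        have h1 : Mv.1 ⊔ K ⊔ N = Mv.1 ⊔ N := by
          rw [sup_assoc, sup_eq_right.2 hKN]
        have h2 : Mv.1 ⊔ N = H.1 ⊔ N := by
          have := VN_mono (inf_le_right : NU ⊓ N ≤ N) H hMvVN
          exact this
        rw [h1, h2]
      have := star ⟨Mv.1 ⊔ K, hcl⟩ le_sup_right hsupN
      have hMvK : Mv.1 ⊔ K = H.1 := congrArg Subtype.val this
      have hMvH : Mv.1 ≤ H.1 := hMvK ▸ (le_sup_left : Mv.1 ≤ Mv.1 ⊔ K)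
      exact Subgroup.isOpen_mono hMvH hMvopen
    -- choose N₀
    obtain ⟨N₀, hN₀n, hN₀o, hN₀sub⟩ := hsnG ((H.1 : Set G) ∩ ((NU : Set G) ∩ (N : Set G)))
      (hHopen.inter (hNUo.inter hNo)) ⟨H.1.one_mem, NU.one_mem, N.one_mem⟩
    have hN₀H : N₀ ≤ H.1 := fun x hx => (hN₀sub hx).1
    have hN₀NU : N₀ ≤ NU := fun x hx => (hN₀sub hx).2.1
    have hN₀N : N₀ ≤ N := fun x hx => (hN₀sub hx).2.2
    have hH0 : H.1 ⊔ N₀ = H.1 := sup_eq_left.2 hN₀H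
    -- descent
    have descent : ∀ n : ℕ, ∀ M : SG G, M ≠ H → M.1 ⊔ N₀ = H.1 ⊔ N₀ → M.1.index = n → False := by
      intro n
      induction n using Nat.strong_induction_on with
      | _ n IH =>
        intro M hMne hMN₀ hMidx
        have hMsup : M.1 ⊔ N₀ = H.1 := by rw [hMN₀, hH0]
        have hMH : M.1 ≤ H.1 := hMsup ▸ (le_sup_left : M.1 ≤ M.1 ⊔ N₀)
        -- M is isolated
        have hMUs : M ∈ Us := hNUsub (VN_mono hN₀NU H hMN₀)
        have hMnotD : M ∉ derivedPts (SG G) := by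
          intro hD
          have : M ∈ Us ∩ derivedPts (SG G) := ⟨hMUs, hD⟩
          rw [hUsD] at this
          exact hMne this
        obtain ⟨N₁', hN₁'n, hN₁'o, hN₁'iso⟩ := isolated_exists hsnG hMnotD
        set N₁ := N₁' ⊓ N₀ with hN₁def
        have hN₁n : N₁.Normal := normal_inf hN₁'n hN₀n
        have hN₁o : IsOpen (N₁ : Set G) := by
          rw [hN₁def, Subgroup.coe_inf]; exact hN₁'o.inter hN₀o
        have hN₁iso : VN N₁ M ⊆ {M} := (VN_mono inf_le_left M).trans hN₁'iso
        have hN₁M : N₁ ≤ M.1 := isolated_le hN₁o hN₁iso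
        have hMopen : IsOpen (M.1 : Set G) := Subgroup.isOpen_mono hN₁M hN₁o
        have hN₁N₀ : N₁ ≤ N₀ := inf_le_right
        have hN₁H : N₁ ≤ H.1 := hN₁N₀.trans hN₀H
        -- H' close to H at level N₁
        obtain ⟨H', hH'VN, hH'ne⟩ := derived_mem_VN hHd N₁ hN₁n hN₁o
        have hH'sup : H'.1 ⊔ N₁ = H.1 := by
          have : H'.1 ⊔ N₁ = H.1 ⊔ N₁ := hH'VN
          rw [this, sup_eq_left.2 hN₁H]
        have hH'H : H'.1 ≤ H.1 := hH'sup ▸ (le_sup_left : H'.1 ≤ H'.1 ⊔ N₁)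
        have hH'neH : H'.1 ≠ H.1 := fun he => hH'ne (Subtype.ext he)
        -- Dedekind / X-argument : M ≤ H'
        haveI := hN₁n
        have hXcl : IsClosed ((H'.1 ⊓ M.1 : Subgroup G) : Set G) := by
          rw [Subgroup.coe_inf]; exact H'.2.inter M.2
        have hXVN : (⟨H'.1 ⊓ M.1, hXcl⟩ : SG G) ∈ VN N₁ M := by
          show (H'.1 ⊓ M.1) ⊔ N₁ = M.1 ⊔ N₁
          apply le_antisymm
          · exact sup_le (inf_le_right.trans le_sup_left) le_sup_right
          · apply sup_le ?_ le_sup_right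
            intro m hm
            have hmH : m ∈ H.1 := hMH hm
            rw [← hH'sup, sup_comm] at hmH
            have hmH' : m ∈ ((N₁ : Set G) * (H'.1 : Set G)) := by
              rw [← Subgroup.normal_mul]
              exact hmH
            obtain ⟨nn, hnn, h', hh', hmul⟩ := hmH'
            have hh'M : h' ∈ M.1 := by
              have : nn⁻¹ * m ∈ M.1 := M.1.mul_mem (M.1.inv_mem (hN₁M hnn)) hm
              have hmul' : nn * h' = m := hmul
              have he : h' = nn⁻¹ * m := by rw [← hmul']; group
              rwa [he]
            have h'X : h' ∈ H'.1 ⊓ M.1 := ⟨hh', hh'M⟩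
            have : nn * h' ∈ (H'.1 ⊓ M.1) ⊔ N₁ :=
              Subgroup.mul_mem _ ((le_sup_right : N₁ ≤ _) hnn) ((le_sup_left : H'.1 ⊓ M.1 ≤ _) h'X)
            have hmul'' : nn * h' = m := hmul
            rwa [hmul''] at this
        have hXeq : H'.1 ⊓ M.1 = M.1 := congrArg Subtype.val (hN₁iso hXVN)
        have hMH' : M.1 ≤ H'.1 := hXeq ▸ (inf_le_left : H'.1 ⊓ M.1 ≤ H'.1)
        have hMneH' : M.1 ≠ H'.1 := by
          intro he
          apply hMne
          apply Subtype.ext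
          have h1 : M.1 ⊔ N₁ = M.1 := sup_eq_left.2 hN₁M
          rw [← h1, he, hH'sup]
        have hstrict : M.1 < H'.1 := lt_of_le_of_ne hMH' hMneH'
        -- index bookkeeping
        haveI : Finite (G ⧸ M.1) := M.1.quotient_finite_of_isOpen hMopen
        haveI : M.1.FiniteIndex := Subgroup.finiteIndex_of_finite_quotient (H := M.1)
        have hidx := Subgroup.relIndex_mul_index hMH'
        have hiM : M.1.index ≠ 0 := Subgroup.FiniteIndex.index_ne_zero
        have hr1 : M.1.relIndex H'.1 ≠ 1 := by
          intro h
          exact (lt_iff_le_not_ge.1 hstrict).2 (Subgroup.relIndex_eq_one.1 h)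
        have hr0 : M.1.relIndex H'.1 ≠ 0 := by
          intro h
          rw [← hidx, h, zero_mul] at hiM
          exact hiM rfl
        have hi'0 : H'.1.index ≠ 0 := by
          intro h
          rw [← hidx, h, mul_zero] at hiM
          exact hiM rfl
        have hlt : H'.1.index < M.1.index := by
          rw [← hidx]
          have h2 : 2 ≤ M.1.relIndex H'.1 := by omega
          calc H'.1.index = 1 * H'.1.index := (one_mul _).symm
          _ < M.1.relIndex H'.1 * H'.1.index := by
              exact Nat.mul_lt_mul_of_lt_of_le (by omega) le_rfl (Nat.pos_of_ne_zero hi'0)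
        have hH'N₀ : H'.1 ⊔ N₀ = H.1 ⊔ N₀ := by
          rw [hH0]
          apply le_antisymm (sup_le hH'H hN₀H)
          rw [← hH'sup]
          exact sup_le le_sup_left (hN₁N₀.trans le_sup_right)
        exact IH H'.1.index (hMidx ▸ hlt) H' hH'ne hH'N₀ rfl
    obtain ⟨M₀, hM₀, hM₀ne⟩ := derived_mem_VN hHd N₀ hN₀n hN₀o
    exact descent _ M₀ hM₀ne hM₀ rfl
  ------------------------------------------------------------------
  -- PART 2 : a punctured neighbourhood of Hbar avoids the derived set
  ------------------------------------------------------------------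
  -- pulling back a non-isolated point of SG (G ⧸ K) gives a non-isolated point of SG G
  have claim1 : ∀ L : SG (G ⧸ K), L ∈ derivedPts (SG (G ⧸ K)) →
      (⟨Subgroup.comap π L.1, hcomapcl L⟩ : SG G) ∈ derivedPts (SG G) := by
    intro L hL
    show _ ∈ closure _
    apply mem_closure_iff.2
    intro U hUo hMU
    obtain ⟨N₂, hN₂n, hN₂o, hN₂sub⟩ := exists_VN_subset hsnG hUo hMU
    set N₂bar := Subgroup.map π N₂ with hN₂bar
    have hN₂barn : N₂bar.Normal := hN₂n.map π hπsurj
    have hN₂baro : IsOpen (N₂bar : Set (G ⧸ K)) := by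
      have : ((N₂bar : Subgroup (G ⧸ K)) : Set (G ⧸ K)) = ((↑) : G → G ⧸ K) '' (N₂ : Set G) := by
        simp [hN₂bar, Subgroup.coe_map]; rfl
      rw [this]
      exact QuotientGroup.isOpenMap_coe _ hN₂o
    obtain ⟨L', hL'VN, hL'ne⟩ := derived_mem_VN hL N₂bar hN₂barn hN₂baro
    have hmapL' : Subgroup.map π (Subgroup.comap π L'.1) = L'.1 :=
      Subgroup.map_comap_eq_self_of_surjective hπsurj _
    have hmapL : Subgroup.map π (Subgroup.comap π L.1) = L.1 :=
      Subgroup.map_comap_eq_self_of_surjective hπsurj _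
    refine ⟨⟨Subgroup.comap π L'.1, hcomapcl L'⟩, hN₂sub ?_, ?_⟩
    · show Subgroup.comap π L'.1 ⊔ N₂ = Subgroup.comap π L.1 ⊔ N₂
      apply hmap_inj _ _ ((hKcomap L'.1).trans le_sup_left) ((hKcomap L.1).trans le_sup_left)
      rw [Subgroup.map_sup, Subgroup.map_sup, hmapL', hmapL, ← hN₂bar]
      exact hL'VN
    · intro he
      apply hL'ne
      apply Subtype.ext
      have hee : Subgroup.comap π L'.1 = Subgroup.comap π L.1 := by
        have := congrArg Subtype.val he
        exact this
      rw [← hmapL', hee, hmapL]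
  -- assemble
  set NUbar := Subgroup.map π NU with hNUbar
  have hNUbarn : NUbar.Normal := hNUn.map π hπsurj
  have hNUbaro : IsOpen (NUbar : Set (G ⧸ K)) := by
    have : ((NUbar : Subgroup (G ⧸ K)) : Set (G ⧸ K)) = ((↑) : G → G ⧸ K) '' (NU : Set G) := by
      simp [hNUbar, Subgroup.coe_map]; rfl
    rw [this]
    exact QuotientGroup.isOpenMap_coe _ hNUo
  refine ⟨part1, VN NUbar Hbar, isOpen_VN NUbar hNUbarn hNUbaro Hbar, ?_⟩
  apply Set.eq_of_subset_of_subset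
  · rintro L ⟨hLVN, hLD⟩
    set Mc : SG G := ⟨Subgroup.comap π L.1, hcomapcl L⟩ with hMc
    have hMcD : Mc ∈ derivedPts (SG G) := claim1 L hLD
    have hmapL : Subgroup.map π (Subgroup.comap π L.1) = L.1 :=
      Subgroup.map_comap_eq_self_of_surjective hπsurj _
    have hMcVN : Mc ∈ VN NU H := by
      show Subgroup.comap π L.1 ⊔ NU = H.1 ⊔ NU
      apply hmap_inj _ _ ((hKcomap L.1).trans le_sup_left) (hKH.trans le_sup_left)
      rw [Subgroup.map_sup, Subgroup.map_sup, hmapL, ← hNUbar]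
      exact hLVN
    have : Mc ∈ Us ∩ derivedPts (SG G) := ⟨hNUsub hMcVN, hMcD⟩
    rw [hUsD] at this
    have hMcH : Subgroup.comap π L.1 = H.1 := congrArg Subtype.val this
    show L = Hbar
    apply Subtype.ext
    show L.1 = Subgroup.map π H.1
    rw [← hMcH, hmapL]
  · intro L hL
    have : L = Hbar := hL
    rw [this]
    exact ⟨self_mem_VN NUbar Hbar, part1⟩
end

section
/- Let G be a profinite group with an open normal subgroup Z topologically isomorphic to Z_p for some prime p, and let H be a non-isolated point of S(G). Then H is solitary in G if and only if H ≤ C_G(Z), the centralizer of Z in G; moreover there are only finitely many such solitary subgroups. -/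
open Pointwise

section SolAuxSection
open Topology

namespace SolAux

variable {G : Type*} [Group G] [TopologicalSpace G]

lemma isOpen_SG_iff {s : Set (SG G)} :
    IsOpen s ↔ ∃ t, IsOpen[vietorisTop G] t ∧ (fun K : SG G => (K.1 : Set G)) ⁻¹' t = s :=
  @isOpen_induced_iff (SG G) (Set G) (vietorisTop G) s (fun K => (K.1 : Set G))

lemma isOpen_sub {U : Set G} (hU : IsOpen U) :
    IsOpen {K : SG G | (K.1 : Set G) ⊆ U} := by
  refine isOpen_SG_iff.2 ⟨{F : Set G | F ⊆ U}, ?_, rfl⟩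
  exact TopologicalSpace.GenerateOpen.basic _ (Or.inl ⟨U, hU, rfl⟩)

lemma isOpen_hit {U : Set G} (hU : IsOpen U) :
    IsOpen {K : SG G | ((K.1 : Set G) ∩ U).Nonempty} := by
  refine isOpen_SG_iff.2 ⟨{F : Set G | (F ∩ U).Nonempty}, ?_, rfl⟩
  exact TopologicalSpace.GenerateOpen.basic _ (Or.inr ⟨U, hU, rfl⟩)

lemma mem_derivedPts_iff {Y : Type*} [TopologicalSpace Y] {y : Y} :
    y ∈ derivedPts Y ↔ ∀ O : Set Y, IsOpen O → y ∈ O → ∃ z ∈ O, z ≠ y := by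
  constructor
  · intro h O hO hy
    rcases mem_closure_iff.1 h O hO hy with ⟨z, hzO, hz⟩
    exact ⟨z, hzO, hz⟩
  · intro h
    refine mem_closure_iff.2 fun O hO hy => ?_
    rcases h O hO hy with ⟨z, hzO, hz⟩
    exact ⟨z, hzO, hz⟩

lemma exists_basic_nbhd {O : Set (SG G)} (hO : IsOpen O) {H : SG G} (hH : H ∈ O) :
    ∃ (U : Set G) (s : Set (Set G)), IsOpen U ∧ (H.1 : Set G) ⊆ U ∧ s.Finite ∧
      (∀ V ∈ s, IsOpen V ∧ ((H.1 : Set G) ∩ V).Nonempty) ∧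
      ∀ K : SG G, (K.1 : Set G) ⊆ U → (∀ V ∈ s, ((K.1 : Set G) ∩ V).Nonempty) → K ∈ O := by
  obtain ⟨t, ht, rfl⟩ := isOpen_SG_iff.1 hO
  have hbasis := @TopologicalSpace.isTopologicalBasis_of_subbasis (Set G) (vietorisTop G) _ rfl
  have hHt : (H.1 : Set G) ∈ t := hH
  obtain ⟨v, hv, hHv, hvt⟩ :=
    @TopologicalSpace.IsTopologicalBasis.exists_subset_of_mem_open (Set G) (vietorisTop G) _
      hbasis (H.1 : Set G) t hHt ht
  obtain ⟨f, ⟨hffin, hfsub⟩, rfl⟩ := hv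
  classical
  set subs : Set (Set G) := {W : Set G | IsOpen W ∧ {F : Set G | F ⊆ W} ∈ f} with hsubs
  set hits : Set (Set G) := {W : Set G | IsOpen W ∧ {F : Set G | (F ∩ W).Nonempty} ∈ f} with hhits
  have hsubsfin : subs.Finite := by
    have himg : (fun W : Set G => {F : Set G | F ⊆ W}) '' subs ⊆ f := by
      rintro _ ⟨W, hW, rfl⟩; exact hW.2
    have hinj : Set.InjOn (fun W : Set G => {F : Set G | F ⊆ W}) subs := by
      intro W₁ _ W₂ _ hEq
      have hEq' : {F : Set G | F ⊆ W₁} = {F : Set G | F ⊆ W₂} := hEq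
      have h1 : W₁ ⊆ W₂ := by
        have : W₁ ∈ {F : Set G | F ⊆ W₂} := by rw [← hEq']; exact Set.Subset.rfl
        exact this
      have h2 : W₂ ⊆ W₁ := by
        have : W₂ ∈ {F : Set G | F ⊆ W₁} := by rw [hEq']; exact Set.Subset.rfl
        exact this
      exact le_antisymm h1 h2
    exact Set.Finite.of_finite_image (hffin.subset himg) hinj
  have hhitsfin : hits.Finite := by
    have himg : (fun W : Set G => {F : Set G | (F ∩ W).Nonempty}) '' hits ⊆ f := by
      rintro _ ⟨W, hW, rfl⟩; exact hW.2
    have hinj : Set.InjOn (fun W : Set G => {F : Set G | (F ∩ W).Nonempty}) hits := by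
      intro W₁ _ W₂ _ hEq
      have hEq' : {F : Set G | (F ∩ W₁).Nonempty} = {F : Set G | (F ∩ W₂).Nonempty} := hEq
      ext x
      constructor
      · intro hx
        have : ({x} : Set G) ∈ {F : Set G | (F ∩ W₂).Nonempty} := by
          rw [← hEq']; exact ⟨x, by simp [hx]⟩
        rcases this with ⟨y, hy1, hy2⟩
        rcases hy1 with rfl; exact hy2
      · intro hx
        have : ({x} : Set G) ∈ {F : Set G | (F ∩ W₁).Nonempty} := by
          rw [hEq']; exact ⟨x, by simp [hx]⟩
        rcases this with ⟨y, hy1, hy2⟩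
        rcases hy1 with rfl; exact hy2
    exact Set.Finite.of_finite_image (hffin.subset himg) hinj
  refine ⟨⋂₀ subs, hits, hsubsfin.isOpen_sInter (fun W hW => hW.1), ?_, hhitsfin, ?_, ?_⟩
  · refine Set.subset_sInter fun W hW => ?_
    exact (Set.mem_sInter.1 hHv _ hW.2 : (H.1 : Set G) ∈ {F : Set G | F ⊆ W})
  · intro V hV
    exact ⟨hV.1, (Set.mem_sInter.1 hHv _ hV.2 : ((H.1 : Set G) ∩ V).Nonempty)⟩
  · intro K hKU hKhits
    refine hvt ?_
    intro x hx
    rcases hfsub hx with hx1 | hx2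
    · obtain ⟨W, hWopen, rfl⟩ := hx1
      have hWsubs : W ∈ subs := ⟨hWopen, hx⟩
      exact (hKU.trans (Set.sInter_subset_of_mem hWsubs) : (K.1 : Set G) ⊆ W)
    · obtain ⟨W, hWopen, rfl⟩ := hx2
      exact hKhits W ⟨hWopen, hx⟩

section Padic

variable {G : Type*} [Group G] [TopologicalSpace G] [IsTopologicalGroup G] [CompactSpace G]
  [T2Space G]
variable {p : ℕ} [Fact p.Prime] {Z : Subgroup G}

set_option linter.unusedSectionVars false

lemma he_one (e : ↥Z ≃ₜ ℤ_[p]) (he : ∀ a b, e (a * b) = e a + e b) : e 1 = 0 := by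
  have h := he 1 1
  rw [mul_one] at h
  have : e 1 + 0 = e 1 + e 1 := by rw [add_zero]; exact h
  exact (add_left_cancel this).symm

lemma he_comm (e : ↥Z ≃ₜ ℤ_[p]) (he : ∀ a b, e (a * b) = e a + e b) (a b : ↥Z) :
    a * b = b * a := by
  apply e.toEquiv.injective
  show e (a * b) = e (b * a)
  rw [he, he, add_comm]

lemma he_inv (e : ↥Z ≃ₜ ℤ_[p]) (he : ∀ a b, e (a * b) = e a + e b) (a : ↥Z) :
    e a⁻¹ = - e a := by
  have h := he a a⁻¹
  rw [mul_inv_cancel, he_one e he] at h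
  exact eq_neg_of_add_eq_zero_right h.symm

lemma he_pow (e : ↥Z ≃ₜ ℤ_[p]) (he : ∀ a b, e (a * b) = e a + e b) (a : ↥Z) (n : ℕ) :
    e (a ^ n) = (n : ℤ_[p]) * e a := by
  induction n with
  | zero => simpa using he_one e he
  | succ k ih => rw [pow_succ, he, ih]; push_cast; ring

lemma he_zpow (e : ↥Z ≃ₜ ℤ_[p]) (he : ∀ a b, e (a * b) = e a + e b) (a : ↥Z) (k : ℤ) :
    e (a ^ k) = (k : ℤ_[p]) * e a := by
  cases k with
  | ofNat n => simpa using he_pow e he a n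
  | negSucc n =>
      rw [zpow_negSucc, he_inv e he, he_pow e he]
      push_cast; ring

lemma he_eq_zero_iff (e : ↥Z ≃ₜ ℤ_[p]) (he : ∀ a b, e (a * b) = e a + e b) (a : ↥Z) :
    e a = 0 ↔ a = 1 := by
  constructor
  · intro h
    have : e a = e 1 := by rw [h, he_one e he]
    exact e.toEquiv.injective this
  · rintro rfl; exact he_one e he

variable (p Z) in
/-- The subgroup of `p^n`-th powers of elements of `Z`. -/
def Zn (hcomm : ∀ a b : ↥Z, a * b = b * a) (n : ℕ) : Subgroup G where
  carrier := {g : G | ∃ z : ↥Z, (z : G) ^ p ^ n = g}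
  one_mem' := ⟨1, by simp⟩
  mul_mem' := by
    rintro a b ⟨z1, rfl⟩ ⟨z2, rfl⟩
    refine ⟨z1 * z2, ?_⟩
    have hc : Commute (z1 : G) (z2 : G) := by
      exact congrArg Subtype.val (hcomm z1 z2)
    rw [Subgroup.coe_mul, hc.mul_pow]
  inv_mem' := by
    rintro a ⟨z, rfl⟩
    exact ⟨z⁻¹, by rw [Subgroup.coe_inv, inv_pow]⟩

lemma mem_Zn_iff (e : ↥Z ≃ₜ ℤ_[p]) (he : ∀ a b, e (a * b) = e a + e b)
    (hcomm : ∀ a b : ↥Z, a * b = b * a) {n : ℕ} {g : G} :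
    g ∈ Zn p Z hcomm n ↔ ∃ hg : g ∈ Z, (p : ℤ_[p]) ^ n ∣ e ⟨g, hg⟩ := by
  constructor
  · rintro ⟨z, rfl⟩
    have hg : (z : G) ^ p ^ n ∈ Z := pow_mem z.2 _
    refine ⟨hg, ?_⟩
    have hz : (⟨(z : G) ^ p ^ n, hg⟩ : ↥Z) = z ^ p ^ n := by
      ext; simp
    rw [hz, he_pow e he]
    exact ⟨e z, by push_cast; ring⟩
  · rintro ⟨hg, c, hc⟩
    refine ⟨e.symm c, ?_⟩
    have h1 : e ((e.symm c) ^ p ^ n) = e (⟨g, hg⟩ : ↥Z) := by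
      rw [he_pow e he, Homeomorph.apply_symm_apply, hc]
      push_cast
      ring
    have h2 := e.toEquiv.injective h1
    have := congrArg Subtype.val h2
    simpa using this

lemma Zn_le_Z (hcomm : ∀ a b : ↥Z, a * b = b * a) (n : ℕ) : Zn p Z hcomm n ≤ Z := by
  rintro g ⟨z, rfl⟩; exact pow_mem z.2 _

lemma Zn_antitone (e : ↥Z ≃ₜ ℤ_[p]) (he : ∀ a b, e (a * b) = e a + e b)
    (hcomm : ∀ a b : ↥Z, a * b = b * a) {m n : ℕ} (hmn : m ≤ n) :
    Zn p Z hcomm n ≤ Zn p Z hcomm m := by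
  intro g hg
  rw [mem_Zn_iff e he hcomm] at hg ⊢
  obtain ⟨hgZ, hdvd⟩ := hg
  exact ⟨hgZ, (pow_dvd_pow _ hmn).trans hdvd⟩

lemma Zn_normal (hZn : Z.Normal) (hcomm : ∀ a b : ↥Z, a * b = b * a) (n : ℕ) :
    (Zn p Z hcomm n).Normal := by
  constructor
  rintro a ⟨z, rfl⟩ g
  refine ⟨⟨g * (z : G) * g⁻¹, hZn.conj_mem _ z.2 g⟩, ?_⟩
  simp [conj_pow]
lemma dvd_iff_norm_lt (x : ℤ_[p]) (n : ℕ) :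
    (p : ℤ_[p]) ^ n ∣ x ↔ ‖x‖ < (p : ℝ) ^ (-(n : ℤ) + 1) := by
  rw [← Ideal.mem_span_singleton, ← PadicInt.norm_le_pow_iff_mem_span_pow,
    PadicInt.norm_le_pow_iff_norm_lt_pow_add_one]

lemma Zn_coe_eq (e : ↥Z ≃ₜ ℤ_[p]) (he : ∀ a b, e (a * b) = e a + e b)
    (hcomm : ∀ a b : ↥Z, a * b = b * a) (n : ℕ) :
    (Zn p Z hcomm n : Set G) =
      (Subtype.val : ↥Z → G) '' (⇑e ⁻¹' {x : ℤ_[p] | ‖x‖ < (p : ℝ) ^ (-(n : ℤ) + 1)}) := by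
  ext g
  constructor
  · intro hg
    obtain ⟨hgZ, hdvd⟩ := (mem_Zn_iff e he hcomm).1 hg
    exact ⟨⟨g, hgZ⟩, (dvd_iff_norm_lt _ n).1 hdvd, rfl⟩
  · rintro ⟨z, hz, rfl⟩
    exact (mem_Zn_iff e he hcomm).2 ⟨z.2, by
      rw [dvd_iff_norm_lt]
      simpa using hz⟩

lemma Zn_isOpen (hZo : IsOpen (Z : Set G)) (e : ↥Z ≃ₜ ℤ_[p])
    (he : ∀ a b, e (a * b) = e a + e b) (hcomm : ∀ a b : ↥Z, a * b = b * a) (n : ℕ) :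
    IsOpen (Zn p Z hcomm n : Set G) := by
  rw [Zn_coe_eq e he hcomm]
  exact hZo.isOpenMap_subtype_val _
    (e.continuous.isOpen_preimage _ (isOpen_lt continuous_norm continuous_const))

lemma Zn_isClosed (hZo : IsOpen (Z : Set G)) (hcomm : ∀ a b : ↥Z, a * b = b * a) (n : ℕ) :
    IsClosed (Zn p Z hcomm n : Set G) := by
  have hZc : IsClosed (Z : Set G) := Subgroup.isClosed_of_isOpen Z hZo
  have hcomp : IsCompact (Z : Set G) := hZc.isCompact
  have : (Zn p Z hcomm n : Set G) = (fun g : G => g ^ p ^ n) '' (Z : Set G) := by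
    ext g
    constructor
    · rintro ⟨z, rfl⟩; exact ⟨z, z.2, rfl⟩
    · rintro ⟨a, ha, rfl⟩; exact ⟨⟨a, ha⟩, rfl⟩
  rw [this]
  exact (hcomp.image (continuous_pow _)).isClosed

lemma Zn_basis (hZo : IsOpen (Z : Set G)) (e : ↥Z ≃ₜ ℤ_[p])
    (he : ∀ a b, e (a * b) = e a + e b) (hcomm : ∀ a b : ↥Z, a * b = b * a)
    {U : Set G} (hU : IsOpen U) (h1 : (1 : G) ∈ U) :
    ∃ n : ℕ, (Zn p Z hcomm n : Set G) ⊆ U := by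
  have hpreo : IsOpen ((Subtype.val : ↥Z → G) ⁻¹' U) := hU.preimage continuous_subtype_val
  have himgo : IsOpen (⇑e '' ((Subtype.val : ↥Z → G) ⁻¹' U)) :=
    (Homeomorph.isOpen_image e).2 hpreo
  have h0 : (0 : ℤ_[p]) ∈ ⇑e '' ((Subtype.val : ↥Z → G) ⁻¹' U) :=
    ⟨1, by simpa using h1, he_one e he⟩
  obtain ⟨ε, hε, hball⟩ := Metric.isOpen_iff.1 himgo 0 h0
  have hp1 : (1 : ℝ) < (p : ℝ) := by
    exact_mod_cast (Fact.out : p.Prime).one_lt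
  obtain ⟨n, hn⟩ : ∃ n : ℕ, (p : ℝ) ^ (-(n : ℤ)) < ε := by
    obtain ⟨n, hn⟩ := exists_pow_lt_of_lt_one hε
      (by rw [one_div]; exact inv_lt_one_of_one_lt₀ hp1 : 1 / (p : ℝ) < 1)
    refine ⟨n, ?_⟩
    calc (p : ℝ) ^ (-(n : ℤ)) = (1 / (p : ℝ)) ^ n := by
          rw [one_div, inv_pow, zpow_neg, zpow_natCast]
      _ < ε := hn
  refine ⟨n, ?_⟩
  intro g hg
  obtain ⟨hgZ, hdvd⟩ := (mem_Zn_iff e he hcomm).1 hg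
  have hnorm : ‖e ⟨g, hgZ⟩‖ ≤ (p : ℝ) ^ (-(n : ℤ)) := by
    rw [PadicInt.norm_le_pow_iff_mem_span_pow, Ideal.mem_span_singleton]
    exact hdvd
  have : e ⟨g, hgZ⟩ ∈ Metric.ball (0 : ℤ_[p]) ε := by
    rw [Metric.mem_ball, dist_zero_right]
    exact lt_of_le_of_lt hnorm hn
  obtain ⟨z, hzU, hze⟩ := hball this
  have : z = ⟨g, hgZ⟩ := e.toEquiv.injective hze
  rw [this] at hzU
  exact hzU

lemma esymm_pow_mem (e : ↥Z ≃ₜ ℤ_[p]) (he : ∀ a b, e (a * b) = e a + e b)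
    (hcomm : ∀ a b : ↥Z, a * b = b * a) (n : ℕ) :
    ((e.symm ((p : ℤ_[p]) ^ n) : ↥Z) : G) ∈ Zn p Z hcomm n := by
  rw [mem_Zn_iff e he hcomm]
  refine ⟨(e.symm ((p : ℤ_[p]) ^ n)).2, ?_⟩
  have : (⟨((e.symm ((p : ℤ_[p]) ^ n) : ↥Z) : G), (e.symm ((p : ℤ_[p]) ^ n)).2⟩ : ↥Z)
      = e.symm ((p : ℤ_[p]) ^ n) := by ext; rfl
  rw [this, Homeomorph.apply_symm_apply]

lemma esymm_pow_ne_one (e : ↥Z ≃ₜ ℤ_[p]) (he : ∀ a b, e (a * b) = e a + e b) (n : ℕ) :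
    ((e.symm ((p : ℤ_[p]) ^ n) : ↥Z) : G) ≠ 1 := by
  intro h
  have h1 : (e.symm ((p : ℤ_[p]) ^ n) : ↥Z) = 1 := by
    ext; simpa using h
  have h2 : ((p : ℤ_[p]) ^ n) = 0 := by
    have := congrArg e h1
    rwa [Homeomorph.apply_symm_apply, he_one e he] at this
  have hp0 : (p : ℤ_[p]) ≠ 0 := by
    exact_mod_cast Nat.cast_ne_zero.2 (Fact.out : p.Prime).ne_zero
  exact pow_ne_zero n hp0 h2

lemma esymm_pow_norm (e : ↥Z ≃ₜ ℤ_[p]) (n : ℕ)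
    (hg : ((e.symm ((p : ℤ_[p]) ^ n) : ↥Z) : G) ∈ Z) :
    ‖e ⟨((e.symm ((p : ℤ_[p]) ^ n) : ↥Z) : G), hg⟩‖ = (p : ℝ) ^ (-(n : ℤ)) := by
  have h1 : (⟨((e.symm ((p : ℤ_[p]) ^ n) : ↥Z) : G), hg⟩ : ↥Z) = e.symm ((p : ℤ_[p]) ^ n) := by
    ext; rfl
  rw [h1, Homeomorph.apply_symm_apply, PadicInt.norm_p_pow]

/-- The key closure lemma: if a closed subgroup `K` contains an element of `Z` of
`e`-norm exactly `p^{-m}`, then `K` contains all of `Zn m`. -/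
lemma Zn_subset_of_mem_closed (e : ↥Z ≃ₜ ℤ_[p]) (he : ∀ a b, e (a * b) = e a + e b)
    (hcomm : ∀ a b : ↥Z, a * b = b * a)
    {K : Subgroup G} (hK : IsClosed (K : Set G)) {g : G}
    (hgZ : g ∈ Z) (hgK : g ∈ K) {m : ℕ}
    (hnorm : ‖e ⟨g, hgZ⟩‖ = (p : ℝ) ^ (-(m : ℤ))) :
    (Zn p Z hcomm m : Set G) ⊆ (K : Set G) := by
  set x : ℤ_[p] := e ⟨g, hgZ⟩ with hx
  have hp1 : (1 : ℝ) < (p : ℝ) := by exact_mod_cast (Fact.out : p.Prime).one_lt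
  have hx0 : x ≠ 0 := by
    intro h
    rw [h, norm_zero] at hnorm
    have : (0 : ℝ) < (p : ℝ) ^ (-(m : ℤ)) := zpow_pos (by linarith) _
    linarith [hnorm.symm]
  -- x = u * p ^ m
  have hval : x.valuation = m := by
    have hle : m ≤ x.valuation := by
      rw [← PadicInt.norm_le_pow_iff_le_valuation x hx0]
      rw [hnorm]
    by_contra hne
    have hlt : m < x.valuation := lt_of_le_of_ne hle (fun h => hne h.symm)
    have hle2 : m + 1 ≤ x.valuation := by omega
    have h2 := (PadicInt.norm_le_pow_iff_le_valuation x hx0 (m + 1)).2 hle2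
    rw [hnorm] at h2
    have : (p : ℝ) ^ (-((m : ℕ) + 1 : ℕ) : ℤ) < (p : ℝ) ^ (-(m : ℤ)) := by
      apply zpow_lt_zpow_right₀ hp1
      push_cast; omega
    linarith
  have hu := PadicInt.unitCoeff_spec hx0
  set u := PadicInt.unitCoeff hx0 with hudef
  rw [hval] at hu
  -- the closed set A
  set A : Set ℤ_[p] := {y : ℤ_[p] | ((e.symm (x * y) : ↥Z) : G) ∈ (K : Set G)} with hA
  have hAclosed : IsClosed A := by
    have hcont : Continuous fun y : ℤ_[p] => ((e.symm (x * y) : ↥Z) : G) :=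
      continuous_subtype_val.comp (e.symm.continuous.comp (continuous_const.mul continuous_id))
    exact hK.preimage hcont
  have hrange : Set.range (Int.cast : ℤ → ℤ_[p]) ⊆ A := by
    rintro _ ⟨k, rfl⟩
    have h1 : e ((⟨g, hgZ⟩ : ↥Z) ^ k) = x * (k : ℤ_[p]) := by
      rw [he_zpow e he]; ring
    have h2 : e.symm (x * (k : ℤ_[p])) = (⟨g, hgZ⟩ : ↥Z) ^ k := by
      rw [← h1, Homeomorph.symm_apply_apply]
    show ((e.symm (x * (k : ℤ_[p])) : ↥Z) : G) ∈ (K : Set G)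
    rw [h2]
    have : ((((⟨g, hgZ⟩ : ↥Z) ^ k : ↥Z)) : G) = g ^ k := by
      simp
    rw [this]
    exact zpow_mem hgK k
  have hAuniv : A = Set.univ := by
    have hdense : closure (Set.range (Int.cast : ℤ → ℤ_[p])) = Set.univ :=
      PadicInt.denseRange_intCast.closure_eq
    have := closure_mono hrange
    rw [hdense, hAclosed.closure_eq] at this
    exact le_antisymm (Set.subset_univ _) this
  -- conclude
  intro h hh
  obtain ⟨hhZ, c, hc⟩ := (mem_Zn_iff e he hcomm).1 hh
  have hpm : (p : ℤ_[p]) ^ m = ((u⁻¹ : ℤ_[p]ˣ) : ℤ_[p]) * x := by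
    rw [hu]
    simp only [← mul_assoc, Units.inv_mul]
    ring
  have hy : e ⟨h, hhZ⟩ = x * (((u⁻¹ : ℤ_[p]ˣ) : ℤ_[p])) * c := by
    rw [hc, hpm]; ring
  have hyA : (((u⁻¹ : ℤ_[p]ˣ) : ℤ_[p]) * c) ∈ A := hAuniv ▸ Set.mem_univ _
  have : e.symm (x * (((u⁻¹ : ℤ_[p]ˣ) : ℤ_[p])) * c) = ⟨h, hhZ⟩ := by
    rw [← hy, Homeomorph.symm_apply_apply]
  have hmemK : ((e.symm (x * ((((u⁻¹ : ℤ_[p]ˣ) : ℤ_[p])) * c)) : ↥Z) : G) ∈ (K : Set G) := hyA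
  rw [← mul_assoc] at hmemK
  rw [this] at hmemK
  exact hmemK
lemma finite_of_triv (hZo : IsOpen (Z : Set G)) {K : Subgroup G} (hKc : IsClosed (K : Set G))
    (htriv : ∀ g, g ∈ K → g ∈ Z → g = 1) : (K : Set G).Finite := by
  classical
  have hcomp : IsCompact (K : Set G) := hKc.isCompact
  have hopen : ∀ i : ↥(K : Set G), IsOpen ((i : G) • (Z : Set G)) :=
    fun i => hZo.leftCoset _
  have hcover : (K : Set G) ⊆ ⋃ i : ↥(K : Set G), (i : G) • (Z : Set G) := by
    intro g hg
    exact Set.mem_iUnion.2 ⟨⟨g, hg⟩, ⟨1, Z.one_mem, by simp⟩⟩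
  obtain ⟨t, ht⟩ := hcomp.elim_finite_subcover _ hopen hcover
  have hsub : (K : Set G) ⊆ ⋃ i ∈ t, ((K : Set G) ∩ (i : G) • (Z : Set G)) := by
    intro g hg
    obtain ⟨i, hi, hgi⟩ := Set.mem_iUnion₂.1 (ht hg)
    exact Set.mem_iUnion₂.2 ⟨i, hi, hg, hgi⟩
  refine Set.Finite.subset (Set.Finite.biUnion t.finite_toSet fun i _ => ?_) hsub
  refine Set.Subsingleton.finite ?_
  rintro a ⟨haK, za, hza, hzaeq⟩ b ⟨hbK, zb, hzb, hzbeq⟩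
  have h1 : a⁻¹ * b ∈ Z := by
    have : a⁻¹ * b = za⁻¹ * zb := by
      rw [← hzaeq, ← hzbeq]; simp [smul_eq_mul]
    rw [this]; exact mul_mem (inv_mem hza) hzb
  have h2 : a⁻¹ * b ∈ K := mul_mem (inv_mem haK) hbK
  have := htriv _ h2 h1
  have : b = a * 1 := by rw [← this]; group
  simpa using this.symm

lemma exists_pow_eq_one_of_finite {K : Subgroup G} (hfin : (K : Set G).Finite) {k : G}
    (hk : k ∈ K) : ∃ N : ℕ, 0 < N ∧ k ^ N = 1 := by
  have hmap : ¬ Function.Injective (fun n : ℕ => k ^ n) := by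
    intro hinj
    exact (Set.infinite_range_of_injective hinj)
      (hfin.subset (by rintro _ ⟨n, rfl⟩; exact pow_mem hk n))
  rw [Function.not_injective_iff] at hmap
  obtain ⟨a, b, hab, hne⟩ := hmap
  rcases Nat.lt_or_ge a b with h | h
  · refine ⟨b - a, by omega, ?_⟩
    have h1 : k ^ a * k ^ (b - a) = k ^ a * 1 := by
      rw [← pow_add, mul_one, show a + (b - a) = b by omega, ← hab]
    exact mul_left_cancel h1
  · have hlt : b < a := by omega
    refine ⟨a - b, by omega, ?_⟩
    have h1 : k ^ b * k ^ (a - b) = k ^ b * 1 := by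
      rw [← pow_add, mul_one, show b + (a - b) = a by omega, hab]
    exact mul_left_cancel h1

lemma eq_one_of_pow_eq_one_mem_Z (e : ↥Z ≃ₜ ℤ_[p]) (he : ∀ a b, e (a * b) = e a + e b)
    {z : G} (hz : z ∈ Z) {N : ℕ} (hN : 0 < N) (hzN : z ^ N = 1) : z = 1 := by
  have h1 : (⟨z, hz⟩ : ↥Z) ^ N = 1 := by ext; simpa using hzN
  have h2 := congrArg e h1
  rw [he_pow e he, he_one e he] at h2
  have h3 : e (⟨z, hz⟩ : ↥Z) = 0 := by
    rcases mul_eq_zero.1 h2 with h | h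
    · exact absurd h (Nat.cast_ne_zero.2 (by omega))
    · exact h
  have h4 := (he_eq_zero_iff e he _).1 h3
  simpa using congrArg Subtype.val h4
lemma not_derived_of_isOpen (hZn : Z.Normal) (hZo : IsOpen (Z : Set G))
    (e : ↥Z ≃ₜ ℤ_[p]) (he : ∀ a b, e (a * b) = e a + e b)
    (hcomm : ∀ a b : ↥Z, a * b = b * a)
    (H : SG G) (hHo : IsOpen ((H.1 : Set G))) : H ∉ derivedPts (SG G) := by
  classical
  obtain ⟨m, hm⟩ := Zn_basis hZo e he hcomm hHo H.1.one_mem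
  set Zm1 : Set G := (Zn p Z hcomm (m + 1) : Set G) with hZm1
  have hZm1o : IsOpen Zm1 := Zn_isOpen hZo e he hcomm (m + 1)
  have hopen : ∀ i : ↥(H.1 : Set G), IsOpen ((i : G) • Zm1) := fun i => hZm1o.leftCoset _
  have hcover : (H.1 : Set G) ⊆ ⋃ i : ↥(H.1 : Set G), (i : G) • Zm1 := fun g hg =>
    Set.mem_iUnion.2 ⟨⟨g, hg⟩, ⟨1, (Zn p Z hcomm (m + 1)).one_mem, by simp⟩⟩
  obtain ⟨t, ht⟩ := (H.2.isCompact).elim_finite_subcover _ hopen hcover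
  set O : Set (SG G) := {K : SG G | (K.1 : Set G) ⊆ (H.1 : Set G)} ∩
    ⋂ i ∈ t, {K : SG G | ((K.1 : Set G) ∩ (i : G) • Zm1).Nonempty} with hO
  have hOopen : IsOpen O :=
    (isOpen_sub hHo).inter (isOpen_biInter_finset fun i _ => isOpen_hit (hZm1o.leftCoset _))
  have hHO : H ∈ O := by
    refine ⟨Set.Subset.rfl, Set.mem_iInter₂.2 fun i _ => ⟨(i : G), i.2, ?_⟩⟩
    exact ⟨1, (Zn p Z hcomm (m + 1)).one_mem, by simp⟩
  have hkey : ∀ K : SG G, K ∈ O → K = H := by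
    rintro K ⟨hKsub, hKhits⟩
    rw [Set.mem_iInter₂] at hKhits
    have step1 : ∀ g ∈ (H.1 : Set G), ∃ k ∈ (K.1 : Set G), g⁻¹ * k ∈ Zn p Z hcomm (m + 1) := by
      intro g hg
      obtain ⟨i, hit, hgUi⟩ := Set.mem_iUnion₂.1 (ht hg)
      obtain ⟨k, hkK, hkUi⟩ := hKhits i hit
      obtain ⟨z1, hz1, hz1eq⟩ := hkUi
      obtain ⟨z2, hz2, hz2eq⟩ := hgUi
      refine ⟨k, hkK, ?_⟩
      have : g⁻¹ * k = z2⁻¹ * z1 := by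
        rw [← hz1eq, ← hz2eq]; simp [smul_eq_mul]
      rw [this]
      exact mul_mem (inv_mem hz2) hz1
    -- step 2 : Zn m ⊆ K
    set gm : G := ((e.symm ((p : ℤ_[p]) ^ m) : ↥Z) : G) with hgm
    have hgmZn : gm ∈ Zn p Z hcomm m := esymm_pow_mem e he hcomm m
    have hgmH : gm ∈ (H.1 : Set G) := hm hgmZn
    obtain ⟨k, hkK, hζ⟩ := step1 gm hgmH
    have hζZ : gm⁻¹ * k ∈ Z := Zn_le_Z hcomm (m + 1) hζ
    have hgmZ : gm ∈ Z := Zn_le_Z hcomm m hgmZn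
    have hkZ : k ∈ Z := by
      have : k = gm * (gm⁻¹ * k) := by group
      rw [this]; exact mul_mem hgmZ hζZ
    have hsplit : (⟨k, hkZ⟩ : ↥Z) = ⟨gm, hgmZ⟩ * ⟨gm⁻¹ * k, hζZ⟩ := by
      ext; simp
    have hgmnorm : e (⟨gm, hgmZ⟩ : ↥Z) = (p : ℤ_[p]) ^ m := by
      have h1 : (⟨gm, hgmZ⟩ : ↥Z) = e.symm ((p : ℤ_[p]) ^ m) := by ext; rfl
      rw [h1, Homeomorph.apply_symm_apply]
    have hζnorm : ‖e (⟨gm⁻¹ * k, hζZ⟩ : ↥Z)‖ ≤ (p : ℝ) ^ (-((m + 1 : ℕ) : ℤ)) := by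
      obtain ⟨hgZ', hdvd⟩ := (mem_Zn_iff e he hcomm).1 hζ
      rw [PadicInt.norm_le_pow_iff_mem_span_pow, Ideal.mem_span_singleton]
      exact hdvd
    have hp1 : (1 : ℝ) < (p : ℝ) := by exact_mod_cast (Fact.out : p.Prime).one_lt
    have hlt : ‖e (⟨gm⁻¹ * k, hζZ⟩ : ↥Z)‖ < ‖(p : ℤ_[p]) ^ m‖ := by
      rw [PadicInt.norm_p_pow]
      refine lt_of_le_of_lt hζnorm ?_
      apply zpow_lt_zpow_right₀ hp1
      push_cast; omega
    have hknorm : ‖e (⟨k, hkZ⟩ : ↥Z)‖ = (p : ℝ) ^ (-(m : ℤ)) := by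
      rw [hsplit, he, hgmnorm]
      rw [PadicInt.norm_add_eq_max_of_ne (by rw [PadicInt.norm_p_pow] at hlt ⊢; exact ne_of_gt hlt)]
      rw [PadicInt.norm_p_pow] at hlt ⊢
      rw [max_eq_left (le_of_lt hlt)]
    have hKZm : (Zn p Z hcomm m : Set G) ⊆ (K.1 : Set G) :=
      Zn_subset_of_mem_closed e he hcomm K.2 hkZ hkK hknorm
    -- step 3
    have step3 : (H.1 : Set G) ⊆ (K.1 : Set G) := by
      intro g hg
      obtain ⟨k', hk'K, hζ'⟩ := step1 g hg
      have hζ'K : g⁻¹ * k' ∈ K.1 := hKZm (Zn_antitone e he hcomm (Nat.le_succ m) hζ')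
      have : g = k' * (g⁻¹ * k')⁻¹ := by group
      rw [this]
      exact mul_mem hk'K (inv_mem hζ'K)
    apply Subtype.ext
    exact le_antisymm hKsub step3
  intro hder
  obtain ⟨K, hKO, hKne⟩ := mem_derivedPts_iff.1 hder O hOopen hHO
  exact hKne (hkey K hKO)

lemma triv_of_mem_derived (hZn : Z.Normal) (hZo : IsOpen (Z : Set G))
    (e : ↥Z ≃ₜ ℤ_[p]) (he : ∀ a b, e (a * b) = e a + e b)
    (hcomm : ∀ a b : ↥Z, a * b = b * a)
    (H : SG G) (hHd : H ∈ derivedPts (SG G)) :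
    ∀ g, g ∈ H.1 → g ∈ Z → g = 1 := by
  by_contra hcon
  push_neg at hcon
  obtain ⟨g, hgH, hgZ, hgne⟩ := hcon
  set x : ℤ_[p] := e ⟨g, hgZ⟩ with hx
  have hx0 : x ≠ 0 := by
    intro h
    exact hgne (by simpa using congrArg Subtype.val ((he_eq_zero_iff e he _).1 h))
  set m : ℕ := x.valuation with hmdef
  have hval : x.valuation = m := rfl
  have hnorm : ‖x‖ = (p : ℝ) ^ (-(m : ℤ)) := by
    rw [PadicInt.norm_eq_zpow_neg_valuation hx0, hval]
  have hZm : (Zn p Z hcomm m : Set G) ⊆ (H.1 : Set G) :=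
    Zn_subset_of_mem_closed e he hcomm H.2 hgZ hgH hnorm
  have hHo : IsOpen (H.1 : Set G) := by
    have heq : (H.1 : Set G) = ⋃ i : ↥(H.1 : Set G), (i : G) • (Zn p Z hcomm m : Set G) := by
      apply le_antisymm
      · intro h hh
        exact Set.mem_iUnion.2 ⟨⟨h, hh⟩, ⟨1, (Zn p Z hcomm m).one_mem, by simp⟩⟩
      · refine Set.iUnion_subset fun i => ?_
        rintro _ ⟨z, hz, rfl⟩
        exact mul_mem i.2 (hZm hz)
    rw [heq]
    exact isOpen_iUnion fun i => (Zn_isOpen hZo e he hcomm m).leftCoset _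
  exact not_derived_of_isOpen hZn hZo e he hcomm H hHo hHd

lemma mem_derived_of_triv (hZn : Z.Normal) (hZo : IsOpen (Z : Set G))
    (e : ↥Z ≃ₜ ℤ_[p]) (he : ∀ a b, e (a * b) = e a + e b)
    (hcomm : ∀ a b : ↥Z, a * b = b * a) (H : SG G)
    (htriv : ∀ g, g ∈ H.1 → g ∈ Z → g = 1) : H ∈ derivedPts (SG G) := by
  rw [mem_derivedPts_iff]
  intro O hO hHO
  obtain ⟨U, s, hUo, hHU, hsfin, hs, hbasic⟩ := exists_basic_nbhd hO hHO
  obtain ⟨V, hV1, hVsub⟩ := compact_open_separated_mul_right (H.2.isCompact) hUo hHU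
  obtain ⟨V', hV'sub, hV'o, h1V'⟩ := mem_nhds_iff.1 hV1
  obtain ⟨n, hn⟩ := Zn_basis hZo e he hcomm hV'o h1V'
  haveI : (Zn p Z hcomm n).Normal := Zn_normal hZn hcomm n
  set Kgrp : Subgroup G := H.1 ⊔ Zn p Z hcomm n with hKgrp
  have hcar : (Kgrp : Set G) = (H.1 : Set G) * (Zn p Z hcomm n : Set G) :=
    Subgroup.mul_normal H.1 _
  have hclosed : IsClosed (Kgrp : Set G) := by
    rw [hcar]
    exact (H.2.isCompact.mul (Zn_isClosed hZo hcomm n).isCompact).isClosed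
  refine ⟨⟨Kgrp, hclosed⟩, hbasic _ ?_ ?_, ?_⟩
  · show (Kgrp : Set G) ⊆ U
    rw [hcar]
    refine subset_trans ?_ hVsub
    exact Set.mul_subset_mul Set.Subset.rfl (hn.trans hV'sub)
  · intro W hW
    obtain ⟨a, haH, haW⟩ := (hs W hW).2
    exact ⟨a, (le_sup_left : H.1 ≤ Kgrp) haH, haW⟩
  · intro hEq
    have hKH : Kgrp = H.1 := congrArg Subtype.val hEq
    set gn : G := ((e.symm ((p : ℤ_[p]) ^ n) : ↥Z) : G) with hgn
    have hgnK : gn ∈ Kgrp := (le_sup_right : Zn p Z hcomm n ≤ Kgrp) (esymm_pow_mem e he hcomm n)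
    exact esymm_pow_ne_one e he n (htriv gn (hKH ▸ hgnK) (Zn_le_Z hcomm n (esymm_pow_mem e he hcomm n)))
lemma le_centralizer_of_solitary (hZn : Z.Normal) (hZo : IsOpen (Z : Set G))
    (e : ↥Z ≃ₜ ℤ_[p]) (he : ∀ a b, e (a * b) = e a + e b)
    (hcomm : ∀ a b : ↥Z, a * b = b * a)
    (H : SG G) (hsol : Solitary H) : H.1 ≤ Subgroup.centralizer (Z : Set G) := by
  classical
  intro h₀ hh₀
  rw [Subgroup.mem_centralizer_iff]
  intro z₀ hz₀
  by_contra hnc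
  have hHd := hsol.1
  have htriv := triv_of_mem_derived hZn hZo e he hcomm H hHd
  have hfin := finite_of_triv hZo H.2 htriv
  obtain ⟨O, hOopen, hOeq⟩ := hsol.2
  have hHO : H ∈ O := by
    have : H ∈ O ∩ derivedPts (SG G) := by rw [hOeq]; rfl
    exact this.1
  obtain ⟨U, s, hUo, hHU, hsfin, hs, hbasic⟩ := exists_basic_nbhd hOopen hHO
  have hchoice : ∀ W ∈ s, ∃ a, a ∈ (H.1 : Set G) ∩ W := fun W hW => (hs W hW).2
  choose a ha using hchoice
  haveI := hfin.to_subtype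
  haveI := hsfin.to_subtype
  have hconj : ∀ c : G, Continuous fun z : G => z * c * z⁻¹ := fun c =>
    (continuous_id.mul continuous_const).mul continuous_inv
  have hconj2 : ∀ c : G, Continuous fun g : G => c * g * c⁻¹ := fun c =>
    (continuous_const.mul continuous_id).mul continuous_const
  set Wc : Set G := (⋂ h : ↥(H.1 : Set G), (fun z : G => z * (h : G) * z⁻¹) ⁻¹' U) ∩
    ⋂ W : ↥s, (fun z : G => z * (a (W : Set G) W.2) * z⁻¹) ⁻¹' (W : Set G) with hWc
  have hWcopen : IsOpen Wc := by
    refine IsOpen.inter ?_ ?_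
    · exact isOpen_iInter_of_finite fun h => (hUo.preimage (hconj _))
    · exact isOpen_iInter_of_finite fun W => ((hs _ W.2).1.preimage (hconj _))
  have h1W : (1 : G) ∈ Wc := by
    constructor
    · exact Set.mem_iInter.2 fun h => by simpa using hHU h.2
    · exact Set.mem_iInter.2 fun W => by simpa using (ha _ W.2).2
  obtain ⟨n, hn⟩ := Zn_basis hZo e he hcomm hWcopen h1W
  -- find a conjugator in `Zn n` that moves `H`
  have hzex : ∃ z ∈ Zn p Z hcomm n, h₀ * z * h₀⁻¹ ≠ z := by
    by_contra hall
    push_neg at hall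
    apply hnc
    have h1 := hall (z₀ ^ p ^ n) ⟨⟨z₀, hz₀⟩, rfl⟩
    have hwZ : h₀ * z₀ * h₀⁻¹ ∈ Z := hZn.conj_mem _ hz₀ _
    have h2 : (h₀ * z₀ * h₀⁻¹) ^ p ^ n = z₀ ^ p ^ n := by rw [conj_pow]; exact h1
    have h3 : (⟨h₀ * z₀ * h₀⁻¹, hwZ⟩ : ↥Z) ^ p ^ n = (⟨z₀, hz₀⟩ : ↥Z) ^ p ^ n := by
      ext; simpa using h2
    have h4 := congrArg e h3
    rw [he_pow e he, he_pow e he] at h4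
    have hpn : ((p ^ n : ℕ) : ℤ_[p]) ≠ 0 :=
      Nat.cast_ne_zero.2 (pow_ne_zero n (Fact.out : p.Prime).ne_zero)
    have h5 := mul_left_cancel₀ hpn h4
    have h7 : h₀ * z₀ * h₀⁻¹ = z₀ := congrArg Subtype.val (e.toEquiv.injective h5)
    calc z₀ * h₀ = (h₀ * z₀ * h₀⁻¹) * h₀ := by rw [h7]
      _ = h₀ * z₀ := by group
  obtain ⟨z, hzZn, hzne⟩ := hzex
  have hzW : z ∈ Wc := hn hzZn
  have hzZ : z ∈ Z := Zn_le_Z hcomm n hzZn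
  -- the conjugated subgroup
  set Kgrp : Subgroup G := Subgroup.map (MulAut.conj z).toMonoidHom H.1 with hKgrp
  have hKcar : (Kgrp : Set G) = (fun g : G => z * g * z⁻¹) '' (H.1 : Set G) := by
    rw [hKgrp, Subgroup.coe_map]
    ext g; simp [MulAut.conj_apply]
  have hKclosed : IsClosed (Kgrp : Set G) := by
    rw [hKcar]
    exact (H.2.isCompact.image (hconj2 z)).isClosed
  set K : SG G := ⟨Kgrp, hKclosed⟩ with hK
  have hKO : K ∈ O := by
    refine hbasic K ?_ ?_
    · intro g hg
      rw [hKcar] at hg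
      obtain ⟨h, hh, rfl⟩ := hg
      exact Set.mem_iInter.1 hzW.1 ⟨h, hh⟩
    · intro W hW
      refine ⟨z * (a W hW) * z⁻¹, ?_, ?_⟩
      · rw [hKcar]; exact ⟨a W hW, (ha W hW).1, rfl⟩
      · exact Set.mem_iInter.1 hzW.2 ⟨W, hW⟩
  have hKd : K ∈ derivedPts (SG G) := by
    refine mem_derived_of_triv hZn hZo e he hcomm K ?_
    intro g hgK hgZ
    rw [show (K.1 : Set G) = (Kgrp : Set G) from rfl] at *
    have hg' : g ∈ (Kgrp : Set G) := hgK
    rw [hKcar] at hg'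
    obtain ⟨h, hh, rfl⟩ := hg'
    have hhZ : h ∈ Z := by
      have : z⁻¹ * (z * h * z⁻¹) * z⁻¹⁻¹ ∈ Z := hZn.conj_mem _ hgZ z⁻¹
      simpa [mul_assoc] using this
    have : h = 1 := htriv h hh hhZ
    rw [this]; group
  have hKH : K = H := by
    have : K ∈ O ∩ derivedPts (SG G) := ⟨hKO, hKd⟩
    rw [hOeq] at this
    exact this
  have hzh₀ : z * h₀ * z⁻¹ ∈ H.1 := by
    have h1 : z * h₀ * z⁻¹ ∈ Kgrp := by
      rw [← SetLike.mem_coe, hKcar]; exact ⟨h₀, hh₀, rfl⟩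
    have h2 : Kgrp = H.1 := congrArg Subtype.val hKH
    rwa [h2] at h1
  have hcZ : (z * h₀ * z⁻¹) * h₀⁻¹ ∈ Z := by
    have heq : (z * h₀ * z⁻¹) * h₀⁻¹ = z * (h₀ * z⁻¹ * h₀⁻¹) := by group
    rw [heq]
    exact mul_mem hzZ (hZn.conj_mem _ (inv_mem hzZ) _)
  have hcH : (z * h₀ * z⁻¹) * h₀⁻¹ ∈ H.1 := mul_mem hzh₀ (inv_mem hh₀)
  have hone := htriv _ hcH hcZ
  apply hzne
  have h8 : z * h₀ * z⁻¹ = h₀ := mul_inv_eq_one.1 hone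
  have h9 : z * h₀ = h₀ * z := by
    calc z * h₀ = (z * h₀ * z⁻¹) * z := by group
      _ = h₀ * z := by rw [h8]
  calc h₀ * z * h₀⁻¹ = (h₀ * z) * h₀⁻¹ := by group
    _ = (z * h₀) * h₀⁻¹ := by rw [h9]
    _ = z := by group
lemma solitary_of_le_centralizer (hZn : Z.Normal) (hZo : IsOpen (Z : Set G))
    (e : ↥Z ≃ₜ ℤ_[p]) (he : ∀ a b, e (a * b) = e a + e b)
    (hcomm : ∀ a b : ↥Z, a * b = b * a)
    (H : SG G) (hHd : H ∈ derivedPts (SG G))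
    (hle : H.1 ≤ Subgroup.centralizer (Z : Set G)) : Solitary H := by
  classical
  refine ⟨hHd, ?_⟩
  have htriv := triv_of_mem_derived hZn hZo e he hcomm H hHd
  have hfin := finite_of_triv hZo H.2 htriv
  -- separation level N
  have hpair : ∀ q : G × G, ∃ n : ℕ,
      (q.1 ∈ H.1 → q.2 ∈ H.1 → q.1 ≠ q.2 → q.1⁻¹ * q.2 ∉ Zn p Z hcomm n) := by
    intro q
    by_cases hq : q.1 ∈ H.1 ∧ q.2 ∈ H.1 ∧ q.1 ≠ q.2
    · obtain ⟨h1, h2, hne⟩ := hq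
      by_cases hZmem : q.1⁻¹ * q.2 ∈ Z
      · set x : ℤ_[p] := e ⟨q.1⁻¹ * q.2, hZmem⟩ with hx
        have hx0 : x ≠ 0 := by
          intro h
          have h5 := congrArg Subtype.val ((he_eq_zero_iff e he _).1 h)
          simp only at h5
          exact hne (by
            have : q.1⁻¹ * q.2 = 1 := h5
            have := inv_mul_eq_one.1 this
            exact this)
        refine ⟨x.valuation + 1, ?_⟩
        intro _ _ _ hmem
        obtain ⟨hg', hdvd⟩ := (mem_Zn_iff e he hcomm).1 hmem
        have hval : x.valuation + 1 ≤ x.valuation := by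
          rw [← PadicInt.mem_span_pow_iff_le_valuation x hx0, Ideal.mem_span_singleton]
          exact hdvd
        omega
      · exact ⟨0, fun _ _ _ hmem => hZmem (Zn_le_Z hcomm 0 hmem)⟩
    · refine ⟨0, fun h1 h2 hne => absurd ⟨h1, h2, hne⟩ hq⟩
  choose nf hnf using hpair
  set P : Finset (G × G) := hfin.toFinset ×ˢ hfin.toFinset with hP
  set N : ℕ := P.sup nf with hN
  have hsep : ∀ a ∈ H.1, ∀ b ∈ H.1, a⁻¹ * b ∈ Zn p Z hcomm N → a = b := by
    intro a ha b hb hmem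
    by_contra hne
    have hqP : (a, b) ∈ P :=
      Finset.mem_product.2 ⟨hfin.mem_toFinset.2 ha, hfin.mem_toFinset.2 hb⟩
    exact hnf (a, b) ha hb hne (Zn_antitone e he hcomm (Finset.le_sup hqP) hmem)
  set ZnN : Set G := (Zn p Z hcomm N : Set G) with hZnN
  have hZnNo : IsOpen ZnN := Zn_isOpen hZo e he hcomm N
  set O : Set (SG G) := {K : SG G | (K.1 : Set G) ⊆ (H.1 : Set G) * ZnN} ∩
    ⋂ h ∈ hfin.toFinset, {K : SG G | ((K.1 : Set G) ∩ h • ZnN).Nonempty} with hO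
  have hOopen : IsOpen O :=
    (isOpen_sub hZnNo.mul_left).inter
      (isOpen_biInter_finset fun h _ => isOpen_hit (hZnNo.leftCoset _))
  have hHO : H ∈ O := by
    constructor
    · intro g hg
      exact ⟨g, hg, 1, (Zn p Z hcomm N).one_mem, mul_one g⟩
    · refine Set.mem_iInter₂.2 fun h hh => ?_
      exact ⟨h, hfin.mem_toFinset.1 hh, ⟨1, (Zn p Z hcomm N).one_mem, by simp⟩⟩
  refine ⟨O, hOopen, ?_⟩
  apply le_antisymm
  · rintro K ⟨⟨hKsub, hKhits⟩, hKd⟩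
    rw [Set.mem_iInter₂] at hKhits
    have htrivK := triv_of_mem_derived hZn hZo e he hcomm K hKd
    have hfinK := finite_of_triv hZo K.2 htrivK
    have hKH : ∀ k ∈ K.1, k ∈ H.1 := by
      intro k hk
      obtain ⟨h, hh, w, hw, hmul0⟩ := hKsub hk
      have hmul : h * w = k := hmul0
      have hwZ : w ∈ Z := Zn_le_Z hcomm N hw
      have hcommhw : Commute h w :=
        (Subgroup.mem_centralizer_iff.1 (hle hh) w hwZ).symm
      obtain ⟨M, hM0, hMk⟩ := exists_pow_eq_one_of_finite hfinK hk
      have hpow : h ^ M * w ^ M = 1 := by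
        rw [← hcommhw.mul_pow, hmul, hMk]
      have hhM : h ^ M = (w ^ M)⁻¹ := eq_inv_of_mul_eq_one_left hpow
      have hhMZ : h ^ M ∈ Z := hhM ▸ inv_mem (pow_mem hwZ M)
      have hhM1 : h ^ M = 1 := htriv _ (pow_mem hh M) hhMZ
      have hwM1 : w ^ M = 1 := by rw [hhM1, one_mul] at hpow; exact hpow
      have hw1 : w = 1 := eq_one_of_pow_eq_one_mem_Z e he hwZ hM0 hwM1
      rw [← hmul, hw1, mul_one]
      exact hh
    have hHK : ∀ h ∈ H.1, h ∈ K.1 := by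
      intro h hh
      obtain ⟨k, hkK, hkW⟩ := hKhits h (hfin.mem_toFinset.2 hh)
      obtain ⟨w, hw, hmul⟩ := hkW
      have hmem : h⁻¹ * k ∈ Zn p Z hcomm N := by
        have : h⁻¹ * k = w := by rw [← hmul]; simp [smul_eq_mul]
        rw [this]; exact hw
      have := hsep h hh k (hKH k hkK) hmem
      rw [this]; exact hkK
    have : K = H := Subtype.ext (le_antisymm (fun k hk => hKH k hk) hHK)
    simp [this]
  · intro K hK
    rw [Set.mem_singleton_iff] at hK
    subst hK
    exact ⟨hHO, hHd⟩
lemma solitary_finite (hZn : Z.Normal) (hZo : IsOpen (Z : Set G))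
    (e : ↥Z ≃ₜ ℤ_[p]) (he : ∀ a b, e (a * b) = e a + e b)
    (hcomm : ∀ a b : ↥Z, a * b = b * a) :
    {K : SG G | Solitary K}.Finite := by
  classical
  haveI : Z.Normal := hZn
  haveI hfinq : Finite (G ⧸ Z) := Z.quotient_finite_of_isOpen hZo
  haveI : Z.FiniteIndex := Subgroup.finiteIndex_of_finite_quotient (H := Z)
  set m : ℕ := Z.index with hm
  have hm0 : m ≠ 0 := Subgroup.FiniteIndex.index_ne_zero
  set T : Set G := {t : G | t ∈ Subgroup.centralizer (Z : Set G) ∧ t ^ m = 1} with hT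
  have hTfin : T.Finite := by
    have hinj : Set.InjOn (QuotientGroup.mk (s := Z)) T := by
      intro t1 h1 t2 h2 hq
      have hz : t1⁻¹ * t2 ∈ Z := QuotientGroup.eq.1 hq
      have hcz : Commute t1 (t1⁻¹ * t2) :=
        (Subgroup.mem_centralizer_iff.1 h1.1 _ hz).symm
      have h3 : (t1 * (t1⁻¹ * t2)) ^ m = t1 ^ m * (t1⁻¹ * t2) ^ m := hcz.mul_pow m
      have h4 : t1 * (t1⁻¹ * t2) = t2 := by group
      rw [h4, h2.2, h1.2, one_mul] at h3
      have h5 : t1⁻¹ * t2 = 1 :=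
        eq_one_of_pow_eq_one_mem_Z e he hz (Nat.pos_of_ne_zero hm0) h3.symm
      have h6 : t2 = t1 * 1 := by rw [← h5]; group
      simpa using h6.symm
    exact Set.Finite.of_finite_image (Set.toFinite _) hinj
  have hsub : ∀ K : SG G, Solitary K → (K.1 : Set G) ⊆ T := by
    intro K hsol k hk
    have htrivK := triv_of_mem_derived hZn hZo e he hcomm K hsol.1
    have hfinK := finite_of_triv hZo K.2 htrivK
    have hleK := le_centralizer_of_solitary hZn hZo e he hcomm K hsol
    refine ⟨hleK hk, ?_⟩
    have hkmZ : k ^ m ∈ Z := Z.pow_index_mem k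
    obtain ⟨M, hM0, hMk⟩ := exists_pow_eq_one_of_finite hfinK hk
    have hpowM : (k ^ m) ^ M = 1 := by
      rw [← pow_mul, mul_comm, pow_mul, hMk, one_pow]
    exact eq_one_of_pow_eq_one_mem_Z e he hkmZ hM0 hpowM
  have hinj2 : Set.InjOn (fun K : SG G => (K.1 : Set G)) {K | Solitary K} := by
    intro K1 _ K2 _ h
    exact Subtype.ext (SetLike.coe_set_eq.1 h)
  have himg2 : ((fun K : SG G => (K.1 : Set G)) '' {K | Solitary K}).Finite := by
    refine hTfin.finite_subsets.subset ?_
    rintro _ ⟨K, hK, rfl⟩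
    exact hsub K hK
  exact Set.Finite.of_finite_image himg2 hinj2
end Padic
end SolAux

end SolAuxSection

/-- Let `G` be a profinite group with an open normal subgroup `Z` topologically
isomorphic to `ℤ_p`, and let `H` be a non-isolated point of `S(G)`. Then `H` is solitary
in `G` if and only if `H ≤ C_G(Z)`; moreover there are only finitely many solitary
subgroups of `G`. -/
theorem solitary_iff_centralizes {G : Type*} [Group G] [TopologicalSpace G]
    [IsTopologicalGroup G] [CompactSpace G] [T2Space G] [TotallyDisconnectedSpace G]
    {p : ℕ} [Fact p.Prime] (Z : Subgroup G) (hZn : Z.Normal) (hZo : IsOpen (Z : Set G))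
    (hZ : ∃ e : Z ≃ₜ ℤ_[p], ∀ a b, e (a * b) = e a + e b)
    (H : SG G) (hHd : H ∈ derivedPts (SG G)) :
    (Solitary H ↔ H.1 ≤ Subgroup.centralizer (Z : Set G)) ∧
    {K : SG G | Solitary K}.Finite := by
  obtain ⟨e, he⟩ := hZ
  have hcomm := SolAux.he_comm e he
  refine ⟨⟨fun hsol => SolAux.le_centralizer_of_solitary hZn hZo e he hcomm H hsol,
    fun hle => SolAux.solitary_of_le_centralizer hZn hZo e he hcomm H hHd hle⟩,
    SolAux.solitary_finite hZn hZo e he hcomm⟩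
end
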